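/- arXiv:2201.06141 — 5 statements merged into one kernel-verified Lean document; each statement's English description precedes it below -/
import Mathlib

section
/- For p ∈ {0} ∪ [1,∞), the decomposable hull of a convex subset of L^p(Ω; E) is convex, and the convex hull of a decomposable subset of L^p(Ω; E) is decomposable; consequently conv(dec A) = dec(conv A) for every A ⊆ L^p(Ω; E). -/
open MeasureTheory
open scoped ENNReal

/-- `A ⊆ L^p(Ω;E)` is decomposable: together with `f` and `g` it contains (the class of)
`1_B f + 1_{B^c} g` for every measurable `B`. -/
def IsDecomposable {Ω : Type*} {mΩ : MeasurableSpace Ω} {μ : Measure Ω} {E : Type*}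
    [NormedAddCommGroup E] {p : ℝ≥0∞} (A : Set (Lp E p μ)) : Prop :=
  ∀ f ∈ A, ∀ g ∈ A, ∀ B : Set Ω, MeasurableSet B →
    ∀ h : Lp E p μ, (h : Ω → E) =ᵐ[μ] (B.indicator f + Bᶜ.indicator g) → h ∈ A

/-- The decomposable hull of `A`: the smallest decomposable subset of `L^p(Ω;E)`
containing `A`. -/
def decHull {Ω : Type*} {mΩ : MeasurableSpace Ω} {μ : Measure Ω} {E : Type*}
    [NormedAddCommGroup E] {p : ℝ≥0∞} (A : Set (Lp E p μ)) : Set (Lp E p μ) :=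
  ⋂₀ {C : Set (Lp E p μ) | A ⊆ C ∧ IsDecomposable C}

section Aux

variable {Ω : Type*} {mΩ : MeasurableSpace Ω} {μ : Measure Ω} {E : Type*}
    [NormedAddCommGroup E] [NormedSpace ℝ E] {p : ℝ≥0∞} {B : Set Ω}

/-- The Lp element `1_B f + 1_{B^c} g`. -/
noncomputable def combLp (hB : MeasurableSet B) (f g : Lp E p μ) : Lp E p μ :=
  ((Lp.memLp f).indicator hB).toLp _ + ((Lp.memLp g).indicator hB.compl).toLp _

theorem combLp_coeFn (hB : MeasurableSet B) (f g : Lp E p μ) :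
    (combLp hB f g : Ω → E) =ᵐ[μ] B.indicator f + Bᶜ.indicator g := by
  filter_upwards [Lp.coeFn_add (((Lp.memLp f).indicator hB).toLp _)
      (((Lp.memLp g).indicator hB.compl).toLp _),
    MemLp.coeFn_toLp ((Lp.memLp f).indicator (ε := E) hB),
    MemLp.coeFn_toLp ((Lp.memLp g).indicator (ε := E) hB.compl)] with ω h1 h2 h3
  exact h1.trans (by simp [Pi.add_apply, h2, h3])

theorem combLp_self (hB : MeasurableSet B) (f : Lp E p μ) : combLp hB f f = f := by
  refine Lp.ext ((combLp_coeFn hB f f).trans ?_)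
  filter_upwards with ω
  by_cases h : ω ∈ B <;> simp [Set.indicator_apply, h]

theorem combLp_add (hB : MeasurableSet B) (f g f' g' : Lp E p μ) :
    combLp hB (f + f') (g + g') = combLp hB f g + combLp hB f' g' := by
  refine Lp.ext ?_
  filter_upwards [combLp_coeFn hB (f + f') (g + g'),
    Lp.coeFn_add (combLp hB f g) (combLp hB f' g'), combLp_coeFn hB f g,
    combLp_coeFn hB f' g', Lp.coeFn_add f f', Lp.coeFn_add g g'] with ω h1 h2 h3 h4 h5 h6
  simp only [Pi.add_apply] at h1 h2 h3 h4 h5 h6 ⊢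
  rw [h1, h2, h3, h4]
  by_cases h : ω ∈ B
  · rw [Set.indicator_of_mem h, Set.indicator_of_mem h, Set.indicator_of_mem h,
      Set.indicator_of_notMem (show ω ∉ Bᶜ by simp [h]),
      Set.indicator_of_notMem (show ω ∉ Bᶜ by simp [h]),
      Set.indicator_of_notMem (show ω ∉ Bᶜ by simp [h]), h5]
    abel
  · rw [Set.indicator_of_notMem h, Set.indicator_of_notMem h, Set.indicator_of_notMem h,
      Set.indicator_of_mem (show ω ∈ Bᶜ from h),
      Set.indicator_of_mem (show ω ∈ Bᶜ from h),
      Set.indicator_of_mem (show ω ∈ Bᶜ from h), h6]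
    abel

theorem combLp_smul (hB : MeasurableSet B) (c : ℝ) (f g : Lp E p μ) :
    combLp hB (c • f) (c • g) = c • combLp hB f g := by
  refine Lp.ext ?_
  filter_upwards [combLp_coeFn hB (c • f) (c • g),
    Lp.coeFn_smul c (combLp hB f g), combLp_coeFn hB f g,
    Lp.coeFn_smul c f, Lp.coeFn_smul c g] with ω h1 h2 h3 h4 h5
  simp only [Pi.add_apply, Pi.smul_apply] at h1 h2 h3 h4 h5 ⊢
  rw [h1, h2, h3]
  by_cases h : ω ∈ B <;> simp [Set.indicator_apply, h, h4, h5]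

/-- `combLp` as a linear map on the product. -/
noncomputable def combLpL (hB : MeasurableSet B) : Lp E p μ × Lp E p μ →ₗ[ℝ] Lp E p μ where
  toFun x := combLp hB x.1 x.2
  map_add' x y := combLp_add hB x.1 x.2 y.1 y.2
  map_smul' c x := combLp_smul hB c x.1 x.2

/-- If `h =ᵐ 1_B f + 1_{B^c} g` then `h = combLp hB f g`. -/
theorem eq_combLp (hB : MeasurableSet B) {f g h : Lp E p μ}
    (hh : (h : Ω → E) =ᵐ[μ] B.indicator f + Bᶜ.indicator g) : h = combLp hB f g :=
  Lp.ext (hh.trans (combLp_coeFn hB f g).symm)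

theorem isDecomposable_decHull (A : Set (Lp E p μ)) : IsDecomposable (decHull A) := by
  intro f hf g hg B hB h hh C hC
  exact hC.2 f (hf C hC) g (hg C hC) B hB h hh

theorem subset_decHull (A : Set (Lp E p μ)) : A ⊆ decHull A :=
  fun f hf C hC => hC.1 hf

theorem decHull_min {A C : Set (Lp E p μ)} (hAC : A ⊆ C) (hC : IsDecomposable C) :
    decHull A ⊆ C := fun f hf => hf C ⟨hAC, hC⟩

theorem isDecomposable_convexHull {A : Set (Lp E p μ)} (hA : IsDecomposable A) :
    IsDecomposable (convexHull ℝ A) := by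
  intro f hf g hg B hB h hh
  rw [eq_combLp hB hh]
  have himg : combLpL (E := E) (μ := μ) (p := p) hB '' (A ×ˢ A) ⊆ A := by
    rintro _ ⟨⟨a, b⟩, ⟨ha, hb⟩, rfl⟩
    exact hA a ha b hb B hB _ (combLp_coeFn hB a b)
  have : combLp hB f g ∈ combLpL (E := E) (μ := μ) (p := p) hB '' (convexHull ℝ (A ×ˢ A)) :=
    ⟨(f, g), by rw [convexHull_prod]; exact ⟨hf, hg⟩, rfl⟩
  rw [LinearMap.image_convexHull] at this
  exact convexHull_min (himg.trans (subset_convexHull ℝ A)) (convex_convexHull ℝ A) this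

theorem convex_decHull {A : Set (Lp E p μ)} (hA : Convex ℝ A) : Convex ℝ (decHull A) := by
  set D := decHull A with hD
  have hDdec := isDecomposable_decHull A
  -- Step 1: combos of an element of A with an element of D lie in D.
  have step1 : ∀ g ∈ D, ∀ f ∈ A, ∀ s t : ℝ, 0 ≤ s → 0 ≤ t → s + t = 1 → s • f + t • g ∈ D := by
    intro g hg
    set S₁ : Set (Lp E p μ) :=
      {g | ∀ f ∈ A, ∀ s t : ℝ, 0 ≤ s → 0 ≤ t → s + t = 1 → s • f + t • g ∈ D} with hS₁
    suffices hDS : D ⊆ S₁ from hDS hg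
    refine decHull_min ?_ ?_
    · intro g hgA f hfA s t hs ht hst
      exact subset_decHull A (hA hfA hgA hs ht hst)
    · intro g₁ hg₁ g₂ hg₂ B hB h hh f hfA s t hs ht hst
      rw [eq_combLp hB hh]
      have key : s • f + t • combLp hB g₁ g₂
          = combLp hB (s • f + t • g₁) (s • f + t • g₂) := by
        rw [combLp_add, combLp_smul, combLp_smul, combLp_self]
      rw [key]
      exact hDdec _ (hg₁ f hfA s t hs ht hst) _ (hg₂ f hfA s t hs ht hst) B hB _
        (combLp_coeFn hB _ _)
  -- Step 2: combos of two elements of D lie in D.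
  intro f hf g hg s t hs ht hst
  set S₂ : Set (Lp E p μ) :=
    {f | ∀ g ∈ D, ∀ s t : ℝ, 0 ≤ s → 0 ≤ t → s + t = 1 → s • f + t • g ∈ D} with hS₂
  suffices hDS : D ⊆ S₂ from hDS hf g hg s t hs ht hst
  refine decHull_min ?_ ?_
  · intro f hfA g hgD s t hs ht hst
    have := step1 g hgD f hfA s t hs ht hst
    exact this
  · intro f₁ hf₁ f₂ hf₂ B hB h hh g hgD s t hs ht hst
    rw [eq_combLp hB hh]
    have key : s • combLp hB f₁ f₂ + t • g
        = combLp hB (s • f₁ + t • g) (s • f₂ + t • g) := by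
      rw [combLp_add, combLp_smul, combLp_smul, combLp_self]
    rw [key]
    exact hDdec _ (hf₁ g hgD s t hs ht hst) _ (hf₂ g hgD s t hs ht hst) B hB _
      (combLp_coeFn hB _ _)

end Aux

/-- For `p ∈ {0} ∪ [1,∞)`: the decomposable hull of a convex set is convex, the convex
hull of a decomposable set is decomposable, and `conv (dec A) = dec (conv A)`. -/
theorem convexHull_decHull_comm {Ω : Type*} {mΩ : MeasurableSpace Ω} {μ : Measure Ω}
    [IsProbabilityMeasure μ] {E : Type*} [NormedAddCommGroup E] [NormedSpace ℝ E]
    [CompleteSpace E] {p : ℝ≥0∞} (hp : p = 0 ∨ 1 ≤ p) (hp' : p ≠ ⊤) :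
    (∀ A : Set (Lp E p μ), Convex ℝ A → Convex ℝ (decHull A)) ∧
    (∀ A : Set (Lp E p μ), IsDecomposable A → IsDecomposable (convexHull ℝ A)) ∧
    (∀ A : Set (Lp E p μ), convexHull ℝ (decHull A) = decHull (convexHull ℝ A)) := by
  refine ⟨fun A hA => convex_decHull hA, fun A hA => isDecomposable_convexHull hA, fun A => ?_⟩
  apply Set.Subset.antisymm
  · exact convexHull_min
      (decHull_min ((subset_convexHull ℝ A).trans (subset_decHull _))
        (isDecomposable_decHull _))
      (convex_decHull (convex_convexHull ℝ A))
  · exact decHull_min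
      (convexHull_mono (subset_decHull A))
      (isDecomposable_convexHull (isDecomposable_decHull A))
end

section
/- Let X be a closed Effros-measurable random set in a separable Banach space E with L^p(X) ≠ ∅, where p ∈ {0}∪[1,∞). Then L^p of the a.s. closed convex hull of X equals the closed convex hull of L^p(X): L^p(c̄onv X) = c̄onv L^p(X). Moreover X is a.s. convex if and only if L^p(X) is convex. -/
set_option maxHeartbeats 1000000


open MeasureTheory
open scoped ENNReal

/-- The set of `L^p` selections of a multifunction `X : Ω → 𝒫(E)`. -/
def SelLp {Ω : Type*} {mΩ : MeasurableSpace Ω} (μ : Measure Ω) {E : Type*}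
    [NormedAddCommGroup E] (p : ℝ≥0∞) (X : Ω → Set E) : Set (Lp E p μ) :=
  {f : Lp E p μ | ∀ᵐ ω ∂μ, f ω ∈ X ω}

/-- Effros measurability of a multifunction. -/
def EffrosMeasurable {Ω : Type*} (mΩ : MeasurableSpace Ω) {E : Type*} [TopologicalSpace E]
    (X : Ω → Set E) : Prop :=
  ∀ U : Set E, IsOpen U → MeasurableSet {ω | (X ω ∩ U).Nonempty}

/-- `Y ∈ L^p(Ω;E)` is the barycenter of the transition probability kernel `K`. -/
def IsKernelBarycenter {Ω : Type*} {mΩ : MeasurableSpace Ω} (μ : Measure Ω) {E : Type*}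
    [NormedAddCommGroup E] [NormedSpace ℝ E] [MeasurableSpace E] {p : ℝ≥0∞}
    (K : ProbabilityTheory.Kernel Ω E) (Y : Lp E p μ) : Prop :=
  ∀ L : E →L[ℝ] ℝ, (fun ω => L (Y ω)) =ᵐ[μ] (fun ω => ∫ x, L x ∂(K ω))

/-- A kernel is Dirac-valued (a.s.) if almost every `K ω` is a Dirac measure. -/
def DiracValued {Ω : Type*} {mΩ : MeasurableSpace Ω} (μ : Measure Ω) {E : Type*}
    [MeasurableSpace E] (K : ProbabilityTheory.Kernel Ω E) : Prop :=
  ∀ᵐ ω ∂μ, ∃ x : E, K ω = MeasureTheory.Measure.dirac x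

/-- A kernel is supported (a.s.) on the multifunction `F`. -/
def KernelSupportedOn {Ω : Type*} {mΩ : MeasurableSpace Ω} (μ : Measure Ω) {E : Type*}
    [MeasurableSpace E] (K : ProbabilityTheory.Kernel Ω E) (F : Ω → Set E) : Prop :=
  ∀ᵐ ω ∂μ, K ω (F ω) = 1

/-- `A ⊆ L^p(Ω;E)` is `p`-Choquet decomposable: it contains the barycenter of every
Dirac-valued transition probability kernel supported a.s. on the closed random set `F_A`
determined by `cl_p (dec A) = L^p(F_A)`, whose barycenter lies in `L^p`. -/
def PChoquetDecomposable {Ω : Type*} {mΩ : MeasurableSpace Ω} (μ : Measure Ω) {E : Type*}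
    [NormedAddCommGroup E] [NormedSpace ℝ E] [MeasurableSpace E] [BorelSpace E]
    (p : ℝ≥0∞) [Fact (1 ≤ p)] (A : Set (Lp E p μ)) : Prop :=
  ∀ F : Ω → Set E, (∀ᵐ ω ∂μ, IsClosed (F ω)) →
    SelLp μ p F = closure (decHull A) →
    ∀ K : ProbabilityTheory.Kernel Ω E, ProbabilityTheory.IsMarkovKernel K →
      DiracValued μ K → KernelSupportedOn μ K F →
      ∀ Y : Lp E p μ, IsKernelBarycenter μ K Y → Y ∈ A


section Helpers

open Set Filter Topology
open scoped ENNReal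

variable {Ω : Type*} {mΩ : MeasurableSpace Ω}

theorem list_map_sum_fin {α M : Type*} [AddCommMonoid M] (L : List α) (f : α → M) :
    (L.map f).sum = ∑ i : Fin L.length, f (L.get i) := by
  induction L with
  | nil => simp
  | cons a l ih =>
    rw [List.map_cons, List.sum_cons, ih]
    show f a + ∑ i : Fin l.length, f (l.get i) = ∑ i : Fin (l.length + 1), f ((a :: l).get i)
    rw [Fin.sum_univ_succ]
    rfl

theorem toList_map_sum {ι M : Type*} [AddCommMonoid M] (s : Finset ι) (f : ι → M) :
    (s.toList.map f).sum = ∑ i ∈ s, f i := by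
  rw [Finset.sum, ← Finset.coe_toList s, Multiset.map_coe, Multiset.sum_coe]

open scoped Classical in

theorem measurable_dfind {P : ℕ → Ω → Prop} {i1 : ∀ ω : Ω, DecidablePred fun m => P m ω}
    {i2 : ∀ ω : Ω, Decidable (∃ m, P m ω)} (hP : ∀ m, MeasurableSet {ω | P m ω}) :
    Measurable fun ω => @dite _ (∃ m, P m ω) (i2 ω)
      (fun h => @Nat.find (fun m => P m ω) (i1 ω) h) (fun _ => 0) := by
  classical
  apply measurable_to_countable'
  intro m
  have heq : (fun ω => @dite _ (∃ m, P m ω) (i2 ω)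
      (fun h => @Nat.find (fun m => P m ω) (i1 ω) h) (fun _ => 0)) ⁻¹' {m} =
      ({ω | ∃ m, P m ω} ∩ ({ω | P m ω} ∩ ⋂ l ∈ Finset.range m, {ω | P l ω}ᶜ)) ∪
      ((if m = 0 then {ω | ∃ m, P m ω}ᶜ else ∅)) := by
    ext ω
    by_cases h : ∃ m, P m ω
    · simp only [mem_preimage, dif_pos h, mem_singleton_iff, mem_union, mem_inter_iff, mem_setOf_eq,
        mem_iInter, Finset.mem_range, mem_compl_iff]
      constructor
      · rintro rfl
        exact Or.inl ⟨h, Nat.find_spec h, fun l hl => Nat.find_min h hl⟩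
      · rintro (⟨-, hm, hmin⟩ | hbad)
        · exact (Nat.find_eq_iff h).2 ⟨hm, fun l hl => hmin l hl⟩
        · split_ifs at hbad with h0
          · exact absurd h hbad
          · exact absurd hbad (Set.notMem_empty ω)
    · simp only [mem_preimage, dif_neg h, mem_singleton_iff, mem_union, mem_inter_iff,
        mem_setOf_eq, mem_compl_iff]
      constructor
      · rintro rfl
        simp [h]
      · rintro (⟨hex, -⟩ | hbad)
        · exact absurd hex h
        · split_ifs at hbad with h0
          · exact h0.symm
          · exact absurd hbad (Set.notMem_empty ω)
  rw [heq]
  have hEx : MeasurableSet {ω | ∃ m, P m ω} := by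
    have h2 : {ω | ∃ m, P m ω} = ⋃ m, {ω | P m ω} := by ext ω; simp
    rw [h2]; exact MeasurableSet.iUnion hP
  refine ((hEx.inter ((hP m).inter ?_)).union ?_)
  · exact MeasurableSet.biInter (Finset.range m).countable_toSet fun l _ => (hP l).compl
  · split_ifs
    · exact hEx.compl
    · exact MeasurableSet.empty

theorem measurable_natglue {β : Type*} [MeasurableSpace β] {F : ℕ → Ω → β}
    (hF : ∀ n, Measurable (F n)) {g : Ω → ℕ} (hg : Measurable g) :
    Measurable fun ω => F (g ω) ω := by
  have h1 : Measurable fun q : Ω × ℕ => F q.2 q.1 :=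
    measurable_from_prod_countable_left fun n => hF n
  exact h1.comp (measurable_id.prodMk hg)


end Helpers

section Selection

open Set Filter Topology

variable {Ω : Type*} {mΩ : MeasurableSpace Ω} {E : Type*} [NormedAddCommGroup E]


variable {Ω : Type*} {mΩ : MeasurableSpace Ω} {E : Type*} [NormedAddCommGroup E]

theorem measurable_infDist' {X : Ω → Set E} (hm : EffrosMeasurable mΩ X)
    (hne : ∀ ω, (X ω).Nonempty) (x : E) :
    Measurable fun ω => Metric.infDist x (X ω) := by
  apply measurable_of_Iio
  intro r
  by_cases hr : 0 < r
  · have heq : (fun ω => Metric.infDist x (X ω)) ⁻¹' Iio r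
        = {ω | (X ω ∩ Metric.ball x r).Nonempty} := by
      ext ω
      simp only [mem_preimage, mem_Iio, mem_setOf_eq]
      rw [Metric.infDist_lt_iff (hne ω)]
      constructor
      · rintro ⟨y, hy, hd⟩; exact ⟨y, hy, by rwa [Metric.mem_ball, dist_comm]⟩
      · rintro ⟨y, hy, hd⟩; exact ⟨y, hy, by rwa [Metric.mem_ball, dist_comm] at hd⟩
    rw [heq]; exact hm _ Metric.isOpen_ball
  · have heq : (fun ω => Metric.infDist x (X ω)) ⁻¹' Iio r = ∅ := by
      ext ω
      simp only [mem_preimage, mem_Iio, mem_empty_iff_false, iff_false, not_lt]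
      exact le_trans (not_lt.1 hr) Metric.infDist_nonneg
    rw [heq]; exact MeasurableSet.empty

open scoped Classical in
/-- one step of the selection construction -/
noncomputable def krnStep (X : Ω → Set E) (e : ℕ → E) (r : ℝ) (x : Ω → E) (c : Ω → ℝ)
    (ω : Ω) : ℕ :=
  if h : ∃ m, (X ω ∩ Metric.ball (e m) r).Nonempty ∧ dist (e m) (x ω) < c ω then Nat.find h
  else 0

theorem krnStep_spec {X : Ω → Set E} {e : ℕ → E} {r : ℝ} {x : Ω → E} {c : Ω → ℝ} {ω : Ω}
    (h : ∃ m, (X ω ∩ Metric.ball (e m) r).Nonempty ∧ dist (e m) (x ω) < c ω) :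
    (X ω ∩ Metric.ball (e (krnStep X e r x c ω)) r).Nonempty ∧
      dist (e (krnStep X e r x c ω)) (x ω) < c ω := by
  classical
  unfold krnStep
  rw [dif_pos h]
  exact Nat.find_spec h

theorem measurable_krnStep {X : Ω → Set E} {e : ℕ → E} {r : ℝ} {x : Ω → E} {c : Ω → ℝ}
    (hsets : ∀ m, MeasurableSet
      {ω | (X ω ∩ Metric.ball (e m) r).Nonempty ∧ dist (e m) (x ω) < c ω}) :
    Measurable (krnStep X e r x c) := by
  unfold krnStep
  exact measurable_dfind hsets

/-- the approximating sequence of indices -/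
noncomputable def krnSeq (X : Ω → Set E) (e : ℕ → E) (η : ℝ) (k0 : Ω → ℕ) : ℕ → Ω → ℕ
  | 0 => k0
  | (j+1) => fun ω =>
      krnStep X e (η/8 * (1/2)^(j+1)) (fun ω' => e (krnSeq X e η k0 j ω'))
        (fun _ => η/8 * (1/2)^j + η/8 * (1/2)^(j+1)) ω

/-- Measurable selection with approximate distance minimization
(Kuratowski–Ryll-Nardzewski). -/
theorem exists_selection [CompleteSpace E] [SecondCountableTopology E]
    {X : Ω → Set E} (hm : EffrosMeasurable mΩ X) (hcl : ∀ ω, IsClosed (X ω))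
    (hne : ∀ ω, (X ω).Nonempty) (x₀ : E) {η : ℝ} (hη : 0 < η) :
    ∃ f : Ω → E, StronglyMeasurable f ∧
      ∀ ω, f ω ∈ X ω ∧ dist (f ω) x₀ ≤ Metric.infDist x₀ (X ω) + η := by
  classical
  haveI : Nonempty E := ⟨x₀⟩
  set e : ℕ → E := TopologicalSpace.denseSeq E with he_def
  have he : DenseRange e := TopologicalSpace.denseRange_denseSeq E
  have heB : ∀ (x : E) (r : ℝ), 0 < r → ∃ m, dist (e m) x < r := by
    intro x r hr
    rcases Metric.denseRange_iff.1 he x r hr with ⟨m, hm'⟩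
    exact ⟨m, by rwa [dist_comm]⟩
  set δ : ℕ → ℝ := fun j => η/8 * (1/2)^j with hδ_def
  have hδpos : ∀ j, 0 < δ j := by
    intro j; apply mul_pos (by linarith) (pow_pos (by norm_num) j)
  -- initial index
  set k0 : Ω → ℕ := krnStep X e (δ 0) (fun _ => x₀)
    (fun ω => Metric.infDist x₀ (X ω) + η/2) with hk0_def
  have hk0ex : ∀ ω, ∃ m, (X ω ∩ Metric.ball (e m) (δ 0)).Nonempty ∧
      dist (e m) x₀ < Metric.infDist x₀ (X ω) + η/2 := by
    intro ω
    obtain ⟨y, hyX, hyd⟩ := (Metric.infDist_lt_iff (hne ω)).1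
      (lt_add_of_pos_right (Metric.infDist x₀ (X ω)) (by linarith : (0:ℝ) < η/4))
    obtain ⟨m, hmd⟩ := heB y (min (δ 0) (η/4)) (lt_min (hδpos 0) (by linarith))
    refine ⟨m, ⟨y, hyX, ?_⟩, ?_⟩
    · rw [Metric.mem_ball, dist_comm]
      exact lt_of_lt_of_le hmd (min_le_left _ _)
    · calc dist (e m) x₀ ≤ dist (e m) y + dist y x₀ := dist_triangle _ _ _
        _ < min (δ 0) (η/4) + (Metric.infDist x₀ (X ω) + η/4) := by
            rw [dist_comm y x₀]; exact add_lt_add hmd hyd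
        _ ≤ Metric.infDist x₀ (X ω) + η/2 := by
            have := min_le_right (δ 0) (η/4); linarith
  have hk0spec : ∀ ω, (X ω ∩ Metric.ball (e (k0 ω)) (δ 0)).Nonempty ∧
      dist (e (k0 ω)) x₀ < Metric.infDist x₀ (X ω) + η/2 :=
    fun ω => krnStep_spec (hk0ex ω)
  set k : ℕ → Ω → ℕ := krnSeq X e η k0 with hk_def
  have hk_succ : ∀ j, k (j+1) = fun ω =>
      krnStep X e (δ (j+1)) (fun ω' => e (k j ω')) (fun _ => δ j + δ (j+1)) ω := by
    intro j; rfl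
  -- invariant
  have hinv : ∀ j ω, (X ω ∩ Metric.ball (e (k j ω)) (δ j)).Nonempty := by
    intro j
    induction j with
    | zero => exact fun ω => (hk0spec ω).1
    | succ j ih =>
      intro ω
      have hex : ∃ m, (X ω ∩ Metric.ball (e m) (δ (j+1))).Nonempty ∧
          dist (e m) (e (k j ω)) < δ j + δ (j+1) := by
        obtain ⟨y, hyX, hyb⟩ := ih ω
        rw [Metric.mem_ball] at hyb
        obtain ⟨m, hmd⟩ := heB y (δ (j+1)) (hδpos _)
        refine ⟨m, ⟨y, hyX, ?_⟩, ?_⟩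
        · rw [Metric.mem_ball, dist_comm]; exact hmd
        · calc dist (e m) (e (k j ω)) ≤ dist (e m) y + dist y (e (k j ω)) :=
              dist_triangle _ _ _
            _ < δ (j+1) + δ j := add_lt_add hmd hyb
            _ = δ j + δ (j+1) := add_comm _ _
      rw [hk_succ j]
      exact (krnStep_spec hex).1
  have hstep : ∀ j ω, dist (e (k (j+1) ω)) (e (k j ω)) < δ j + δ (j+1) := by
    intro j ω
    have hex : ∃ m, (X ω ∩ Metric.ball (e m) (δ (j+1))).Nonempty ∧
        dist (e m) (e (k j ω)) < δ j + δ (j+1) := by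
      obtain ⟨y, hyX, hyb⟩ := hinv j ω
      rw [Metric.mem_ball] at hyb
      obtain ⟨m, hmd⟩ := heB y (δ (j+1)) (hδpos _)
      refine ⟨m, ⟨y, hyX, ?_⟩, ?_⟩
      · rw [Metric.mem_ball, dist_comm]; exact hmd
      · calc dist (e m) (e (k j ω)) ≤ dist (e m) y + dist y (e (k j ω)) :=
            dist_triangle _ _ _
          _ < δ (j+1) + δ j := add_lt_add hmd hyb
          _ = δ j + δ (j+1) := add_comm _ _
    rw [hk_succ j]
    exact (krnStep_spec hex).2
  -- geometric bound
  have hgeo : ∀ ω j, dist (e (k j ω)) (e (k (j+1) ω)) ≤ (η/4) * (1/2)^j := by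
    intro ω j
    rw [dist_comm]
    refine le_trans (le_of_lt (hstep j ω)) ?_
    have : δ j + δ (j+1) = (η/8) * (1/2)^j + (η/8) * ((1/2)^j * (1/2)) := by
      simp only [hδ_def, pow_succ]
    rw [this]
    have h2 : (0:ℝ) < (1/2)^j := pow_pos (by norm_num) j
    nlinarith
  have hr2 : (1:ℝ)/2 < 1 := by norm_num
  have hcauchy : ∀ ω, CauchySeq (fun j => e (k j ω)) :=
    fun ω => cauchySeq_of_le_geometric (1/2) (η/4) hr2 (hgeo ω)
  have hlim : ∀ ω, ∃ a, Tendsto (fun j => e (k j ω)) atTop (𝓝 a) :=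
    fun ω => cauchySeq_tendsto_of_complete (hcauchy ω)
  set f : Ω → E := fun ω => (hlim ω).choose with hf_def
  have hf : ∀ ω, Tendsto (fun j => e (k j ω)) atTop (𝓝 (f ω)) :=
    fun ω => (hlim ω).choose_spec
  -- measurability
  letI : MeasurableSpace E := borel E
  haveI : BorelSpace E := ⟨rfl⟩
  have hkmeas : ∀ j, Measurable (k j) := by
    intro j
    induction j with
    | zero =>
      show Measurable k0
      rw [hk0_def]
      apply measurable_krnStep
      intro m
      apply MeasurableSet.inter
      · exact hm _ Metric.isOpen_ball
      · have hmeas := (measurable_infDist' hm hne x₀).add_const (η/2)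
        exact hmeas (measurableSet_Ioi (a := dist (e m) x₀))
    | succ j ih =>
      rw [hk_succ j]
      apply measurable_krnStep
      intro m
      apply MeasurableSet.inter
      · exact hm _ Metric.isOpen_ball
      · exact ih (show MeasurableSet {n : ℕ | dist (e m) (e n) < δ j + δ (j+1)} from
          MeasurableSpace.measurableSet_top)
  have hsm : StronglyMeasurable f := by
    apply stronglyMeasurable_of_tendsto (atTop : Filter ℕ)
      (f := fun j ω => e (k j ω)) (g := f)
    · intro j
      exact ((measurable_from_top (f := e)).comp (hkmeas j)).stronglyMeasurable
    · rw [tendsto_pi_nhds]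
      exact hf
  refine ⟨f, hsm, fun ω => ?_⟩
  -- membership
  have hxj : ∀ j, ∃ y, y ∈ X ω ∧ dist y (e (k j ω)) < δ j := by
    intro j
    obtain ⟨y, hyX, hyb⟩ := hinv j ω
    exact ⟨y, hyX, Metric.mem_ball.1 hyb⟩
  choose x hxX hxd using hxj
  have hflim : ∀ j, dist (e (k j ω)) (f ω) ≤ (η/4) * (1/2)^j / (1 - 1/2) :=
    fun j => dist_le_of_le_geometric_of_tendsto (1/2) (η/4) hr2 (hgeo ω) (hf ω) j
  have hxlim : Tendsto x atTop (𝓝 (f ω)) := by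
    rw [tendsto_iff_dist_tendsto_zero]
    apply squeeze_zero (fun j => dist_nonneg)
      (g := fun j => δ j + (η/4) * (1/2)^j / (1 - 1/2))
    · intro j
      calc dist (x j) (f ω) ≤ dist (x j) (e (k j ω)) + dist (e (k j ω)) (f ω) :=
          dist_triangle _ _ _
        _ ≤ δ j + (η/4) * (1/2)^j / (1 - 1/2) :=
          add_le_add (le_of_lt (hxd j)) (hflim j)
    · have h1 : Tendsto (fun j : ℕ => ((1:ℝ)/2)^j) atTop (𝓝 0) :=
        tendsto_pow_atTop_nhds_zero_of_lt_one (by norm_num) (by norm_num)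
      have : (fun j : ℕ => δ j + (η/4) * (1/2)^j / (1 - 1/2))
          = fun j : ℕ => (η/8 + (η/4) / (1 - 1/2)) * (1/2)^j := by
        funext j; simp only [hδ_def]; ring
      rw [this]
      simpa using h1.const_mul (η/8 + (η/4) / (1 - 1/2))
  constructor
  · exact (hcl ω).mem_of_tendsto hxlim (Eventually.of_forall hxX)
  · have h0 : dist (e (k 0 ω)) x₀ < Metric.infDist x₀ (X ω) + η/2 := (hk0spec ω).2
    have h1 : dist (e (k 0 ω)) (f ω) ≤ (η/4) * (1/2)^0 / (1 - 1/2) := hflim 0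
    have : dist (f ω) x₀ ≤ dist (f ω) (e (k 0 ω)) + dist (e (k 0 ω)) x₀ := dist_triangle _ _ _
    rw [dist_comm (f ω) (e (k 0 ω))] at this
    simp only [pow_zero, mul_one] at h1
    have h2 : (η/4) / (1 - 1/2) = η/2 := by ring
    rw [h2] at h1
    linarith



/-- A Castaing representation: countably many measurable selections, pointwise dense. -/
theorem exists_castaing [CompleteSpace E] [SecondCountableTopology E]
    {X : Ω → Set E} (hm : EffrosMeasurable mΩ X) (hcl : ∀ ω, IsClosed (X ω))
    (hne : ∀ ω, (X ω).Nonempty) :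
    ∃ ξ : ℕ → Ω → E, (∀ n, StronglyMeasurable (ξ n)) ∧ (∀ n ω, ξ n ω ∈ X ω) ∧
      ∀ ω, ∀ x ∈ X ω, ∀ ε > 0, ∃ n, dist (ξ n ω) x < ε := by
  haveI : Nonempty E := ⟨0⟩
  set e : ℕ → E := TopologicalSpace.denseSeq E with he_def
  have he : DenseRange e := TopologicalSpace.denseRange_denseSeq E
  have H : ∀ q : ℕ × ℕ, ∃ f : Ω → E, StronglyMeasurable f ∧
      ∀ ω, f ω ∈ X ω ∧ dist (f ω) (e q.1) ≤
        Metric.infDist (e q.1) (X ω) + 1/((q.2 : ℝ)+1) :=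
    fun q => exists_selection hm hcl hne (e q.1) (by positivity)
  choose F hFsm hF using H
  refine ⟨fun n => F n.unpair, fun n => hFsm _, fun n ω => (hF _ ω).1, ?_⟩
  intro ω x hx ε hε
  obtain ⟨n, hn⟩ := Metric.denseRange_iff.1 he x (ε/4) (by linarith)
  obtain ⟨m, hm'⟩ := exists_nat_one_div_lt (show (0:ℝ) < ε/4 by linarith)
  refine ⟨Nat.pair n m, ?_⟩
  show dist (F (Nat.unpair (Nat.pair n m)) ω) x < ε
  rw [Nat.unpair_pair]
  have h1 := (hF (n, m) ω).2
  have h2 : Metric.infDist (e n) (X ω) ≤ dist (e n) x := Metric.infDist_le_dist_of_mem hx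
  have h3 : dist (e n) x < ε/4 := by rwa [dist_comm] at hn
  calc dist (F (n,m) ω) x ≤ dist (F (n,m) ω) (e n) + dist (e n) x := dist_triangle _ _ _
    _ ≤ (Metric.infDist (e n) (X ω) + 1/((m:ℝ)+1)) + dist (e n) x := add_le_add h1 le_rfl
    _ < ε := by linarith


end Selection

section RatCombo

open Set

/-- A list of rational weights with indices which is a valid convex combination. -/
def ValidL (L : List (ℚ × ℕ)) : Prop :=
  (∀ pr ∈ L, (0:ℚ) ≤ pr.1) ∧ (L.map Prod.fst).sum = 1

variable {V : Type*} [NormedAddCommGroup V] [NormedSpace ℝ V]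

theorem dense_ratCombo (S : Set V) (z : ℕ → V)
    (hz : ∀ x ∈ S, ∀ ε > 0, ∃ j, dist (z j) x < ε) {x : V}
    (hx : x ∈ closure (convexHull ℝ S)) {ε : ℝ} (hε : 0 < ε) :
    ∃ L : List (ℚ × ℕ), ValidL L ∧
      dist ((L.map fun pr => (pr.1 : ℝ) • z pr.2).sum) x < ε := by
  classical
  obtain ⟨y, hy, hxy⟩ := Metric.mem_closure_iff.1 hx (ε/2) (by linarith)
  rw [convexHull_eq] at hy
  obtain ⟨ι, t, w, zz, hw0, hw1, hzz, hyy⟩ := hy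
  have hyc : y = ∑ i ∈ t, w i • zz i := by
    rw [← hyy, Finset.centerMass_eq_of_sum_1 _ _ hw1]
  have htne : t.Nonempty := Finset.nonempty_of_sum_ne_zero (by rw [hw1]; exact one_ne_zero)
  obtain ⟨i₀, hi₀⟩ := htne
  have Hj : ∀ i : ι, ∃ j, i ∈ t → dist (z j) (zz i) < ε/8 := by
    intro i
    by_cases hi : i ∈ t
    · obtain ⟨j, hj⟩ := hz (zz i) (hzz i hi) (ε/8) (by linarith)
      exact ⟨j, fun _ => hj⟩
    · exact ⟨0, fun h => absurd h hi⟩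
  choose j hj using Hj
  set M : ℝ := (∑ i ∈ t, ‖z (j i)‖) + 1 with hM
  have hMpos : 0 < M :=
    add_pos_of_nonneg_of_pos (Finset.sum_nonneg fun _ _ => norm_nonneg _) one_pos
  have hzM : ∀ i ∈ t, ‖z (j i)‖ ≤ M := by
    intro i hi
    have h1 : ‖z (j i)‖ ≤ ∑ i ∈ t, ‖z (j i)‖ :=
      Finset.single_le_sum (f := fun i => ‖z (j i)‖) (fun _ _ => norm_nonneg _) hi
    linarith
  obtain ⟨N, hN⟩ := exists_nat_gt (max 1 (2 * (t.card : ℝ) * M / (ε/8)))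
  have hN1 : (1:ℝ) < N := lt_of_le_of_lt (le_max_left _ _) hN
  have hNpos : (0:ℝ) < N := by linarith
  have hNM : 2 * (t.card : ℝ) * M / (ε/8) < N := lt_of_le_of_lt (le_max_right _ _) hN
  -- rational approximations of the weights
  set r : ι → ℚ := fun i => (⌊w i * N⌋₊ : ℚ) / (N : ℚ) with hr
  have hr0 : ∀ i, 0 ≤ r i := fun i => by positivity
  have hrle : ∀ i ∈ t, ((r i : ℝ)) ≤ w i := by
    intro i hi
    have h1 : ((r i : ℝ)) = (⌊w i * N⌋₊ : ℝ) / N := by rw [hr]; push_cast; ring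
    rw [h1, div_le_iff₀ hNpos]
    exact Nat.floor_le (mul_nonneg (hw0 i hi) (le_of_lt hNpos))
  have hrge : ∀ i ∈ t, w i - 1/N ≤ (r i : ℝ) := by
    intro i hi
    have h1 : ((r i : ℝ)) = (⌊w i * N⌋₊ : ℝ) / N := by rw [hr]; push_cast; ring
    have h2 : w i * N - 1 < (⌊w i * N⌋₊ : ℝ) := Nat.sub_one_lt_floor _
    rw [h1, le_div_iff₀ hNpos]
    have h3 : (w i - 1/(N:ℝ)) * N = w i * N - 1 := by field_simp
    linarith
  obtain ⟨q, hqi0, hqelse⟩ : ∃ q : ι → ℚ, q i₀ = 1 - ∑ i' ∈ t.erase i₀, r i' ∧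
      ∀ i, i ≠ i₀ → q i = r i :=
    ⟨fun i => if i = i₀ then 1 - ∑ i' ∈ t.erase i₀, r i' else r i, by simp,
      fun i hi => by simp [hi]⟩
  have hqsum : ∑ i ∈ t, q i = 1 := by
    rw [← Finset.add_sum_erase _ _ hi₀]
    have h1 : ∑ i' ∈ t.erase i₀, q i' = ∑ i' ∈ t.erase i₀, r i' :=
      Finset.sum_congr rfl fun i hi => hqelse i (Finset.ne_of_mem_erase hi)
    rw [h1, hqi0]; ring
  have herasesum : ∑ i' ∈ t.erase i₀, w i' = 1 - w i₀ := by
    have := Finset.add_sum_erase t w hi₀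
    rw [hw1] at this; linarith
  have hqerr : ∀ i ∈ t.erase i₀, |w i - (q i : ℝ)| ≤ 1/N := by
    intro i hi
    rw [hqelse i (Finset.ne_of_mem_erase hi)]
    have h1 := hrle i (Finset.mem_of_mem_erase hi)
    have h2 := hrge i (Finset.mem_of_mem_erase hi)
    rw [abs_le]; constructor <;> nlinarith
  have hq0r : ∀ i ∈ t, (0:ℝ) ≤ (q i : ℝ) := by
    intro i hi
    by_cases h : i = i₀
    · rw [h, hqi0]
      push_cast
      have h1 : ∑ i' ∈ t.erase i₀, ((r i' : ℝ)) ≤ ∑ i' ∈ t.erase i₀, w i' :=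
        Finset.sum_le_sum fun i hi => hrle i (Finset.mem_of_mem_erase hi)
      have h2 := hw0 i₀ hi₀
      rw [herasesum] at h1
      linarith
    · rw [hqelse i h]
      exact_mod_cast hr0 i
  have hq0 : ∀ i ∈ t, 0 ≤ q i := fun i hi => by exact_mod_cast hq0r i hi
  have hqerr0 : |w i₀ - (q i₀ : ℝ)| ≤ (t.card : ℝ)/N := by
    rw [hqi0]
    push_cast
    have h1 : w i₀ - (1 - ∑ i' ∈ t.erase i₀, ((r i' : ℝ)))
        = ∑ i' ∈ t.erase i₀, ((r i' : ℝ) - w i') := by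
      rw [Finset.sum_sub_distrib]
      have : ∑ i' ∈ t.erase i₀, ((r i' : ℝ)) - ∑ i' ∈ t.erase i₀, w i'
          = ∑ i' ∈ t.erase i₀, ((r i' : ℝ)) - (1 - w i₀) := by rw [herasesum]
      rw [this]; ring
    rw [h1]
    refine le_trans (Finset.abs_sum_le_sum_abs _ _) ?_
    have h2 : ∀ i ∈ t.erase i₀, |(r i : ℝ) - w i| ≤ 1/N := by
      intro i hi
      rw [abs_sub_comm]
      have := hqerr i hi
      rw [hqelse i (Finset.ne_of_mem_erase hi)] at this
      exact this
    refine le_trans (Finset.sum_le_sum h2) ?_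
    rw [Finset.sum_const, nsmul_eq_mul]
    have h3 : ((t.erase i₀).card : ℝ) ≤ (t.card : ℝ) := by
      exact_mod_cast Finset.card_le_card (Finset.erase_subset _ _)
    have h4 : (0:ℝ) ≤ 1/N := by positivity
    refine le_trans (mul_le_mul_of_nonneg_right h3 h4) (le_of_eq (by ring))
  have hqtotal : ∑ i ∈ t, |w i - (q i : ℝ)| ≤ 2 * (t.card : ℝ)/N := by
    rw [← Finset.add_sum_erase _ _ hi₀]
    have h1 : ∑ i ∈ t.erase i₀, |w i - (q i : ℝ)| ≤ ∑ i ∈ t.erase i₀, 1/(N:ℝ) :=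
      Finset.sum_le_sum hqerr
    rw [Finset.sum_const, nsmul_eq_mul] at h1
    have h3 : ((t.erase i₀).card : ℝ) ≤ (t.card : ℝ) := by
      exact_mod_cast Finset.card_le_card (Finset.erase_subset _ _)
    have h4 : (0:ℝ) ≤ 1/N := by positivity
    have h5 := mul_le_mul_of_nonneg_right h3 h4
    have := hqerr0
    calc |w i₀ - (q i₀:ℝ)| + ∑ i ∈ t.erase i₀, |w i - (q i : ℝ)|
        ≤ (t.card : ℝ)/N + (t.card : ℝ) * (1/(N:ℝ)) := by
          refine add_le_add hqerr0 (le_trans h1 h5)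
      _ = 2 * (t.card : ℝ)/N := by ring
  -- the approximating combination
  set v : V := ∑ i ∈ t, (q i : ℝ) • z (j i) with hv
  have hvy : dist v y < ε/4 := by
    rw [dist_eq_norm, hyc, ← Finset.sum_sub_distrib]
    have h1 : ∀ i ∈ t, (q i : ℝ) • z (j i) - w i • zz i
        = ((q i : ℝ) - w i) • z (j i) + w i • (z (j i) - zz i) := by
      intro i hi
      rw [sub_smul, smul_sub]; abel
    rw [Finset.sum_congr rfl h1, Finset.sum_add_distrib]
    refine lt_of_le_of_lt (norm_add_le _ _) ?_
    have h2 : ‖∑ i ∈ t, ((q i : ℝ) - w i) • z (j i)‖ ≤ 2 * (t.card : ℝ) * M / N := by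
      refine le_trans (norm_sum_le _ _) ?_
      have h3 : ∀ i ∈ t, ‖((q i : ℝ) - w i) • z (j i)‖ ≤ |w i - (q i : ℝ)| * M := by
        intro i hi
        rw [norm_smul, Real.norm_eq_abs, abs_sub_comm]
        exact mul_le_mul_of_nonneg_left (hzM i hi) (abs_nonneg _)
      refine le_trans (Finset.sum_le_sum h3) ?_
      rw [← Finset.sum_mul]
      have := mul_le_mul_of_nonneg_right hqtotal (le_of_lt hMpos)
      calc (∑ i ∈ t, |w i - (q i : ℝ)|) * M ≤ 2 * (t.card : ℝ)/N * M := this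
        _ = 2 * (t.card : ℝ) * M / N := by ring
    have h4 : ‖∑ i ∈ t, w i • (z (j i) - zz i)‖ ≤ ε/8 := by
      refine le_trans (norm_sum_le _ _) ?_
      have h5 : ∀ i ∈ t, ‖w i • (z (j i) - zz i)‖ ≤ w i * (ε/8) := by
        intro i hi
        rw [norm_smul, Real.norm_eq_abs, abs_of_nonneg (hw0 i hi)]
        refine mul_le_mul_of_nonneg_left ?_ (hw0 i hi)
        rw [← dist_eq_norm]
        exact le_of_lt (hj i hi)
      refine le_trans (Finset.sum_le_sum h5) ?_
      rw [← Finset.sum_mul, hw1, one_mul]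
    have h6 : 2 * (t.card : ℝ) * M / N < ε/8 := by
      rw [div_lt_iff₀ hNpos]
      have h7 : 2 * (t.card : ℝ) * M / (ε/8) * (ε/8) = 2 * (t.card : ℝ) * M := by
        field_simp
      calc 2 * (t.card : ℝ) * M = 2 * (t.card : ℝ) * M / (ε/8) * (ε/8) := h7.symm
        _ < N * (ε/8) := by
            refine mul_lt_mul_of_pos_right hNM (by linarith)
        _ = ε/8 * N := by ring
    linarith
  refine ⟨t.toList.map (fun i => (q i, j i)), ⟨?_, ?_⟩, ?_⟩
  · intro pr hpr
    rw [List.mem_map] at hpr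
    obtain ⟨i, hi, rfl⟩ := hpr
    rw [Finset.mem_toList] at hi
    exact hq0 i hi
  · rw [List.map_map]
    have : (Prod.fst ∘ fun i => (q i, j i)) = q := rfl
    rw [this, toList_map_sum, hqsum]
  · rw [List.map_map]
    have heq : ((fun pr : ℚ × ℕ => (pr.1 : ℝ) • z pr.2) ∘ fun i => (q i, j i))
        = fun i => (q i : ℝ) • z (j i) := rfl
    rw [heq, toList_map_sum]
    calc dist (∑ i ∈ t, (q i : ℝ) • z (j i)) x ≤ dist v y + dist y x := by
          rw [hv]; exact dist_triangle _ _ _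
      _ < ε/4 + ε/2 := by
          rw [dist_comm y x]
          exact add_lt_add hvy hxy
      _ < ε := by linarith

end RatCombo


section LpGlue

open scoped Classical
open Set Filter Topology
open scoped ENNReal

variable {Ω : Type*} {mΩ : MeasurableSpace Ω} {μ : Measure Ω} {E : Type*}
  [NormedAddCommGroup E] [NormedSpace ℝ E] [SecondCountableTopology E] {p : ℝ≥0∞}

theorem Lp.coeFn_finset_sum_smul {ι : Type*} (s : Finset ι) (c : ι → ℝ) (F : ι → Lp E p μ) :
    ⇑(∑ i ∈ s, c i • F i) =ᵐ[μ] fun ω => ∑ i ∈ s, c i • (F i : Ω → E) ω := by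
  classical
  induction s using Finset.induction_on with
  | empty =>
    simp only [Finset.sum_empty]
    filter_upwards [Lp.coeFn_zero (E := E) (p := p) (μ := μ)] with ω hω using hω
  | insert a t hni ih =>
    rw [Finset.sum_insert hni]
    filter_upwards [Lp.coeFn_add (c a • F a) (∑ i ∈ t, c i • F i), Lp.coeFn_smul (c a) (F a),
      ih] with ω h1 h2 h3
    rw [h1]
    simp only [Pi.add_apply]
    rw [h2, h3, Finset.sum_insert hni]
    rfl

theorem memℒp_piecewise {u v : Lp E p μ} {B : Set Ω} (hB : MeasurableSet B) :
    MemLp (fun ω => if ω ∈ B then (u : Ω → E) ω else (v : Ω → E) ω) p μ := by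
  classical
  have heq : (fun ω => if ω ∈ B then (u : Ω → E) ω else (v : Ω → E) ω)
      = B.indicator u + Bᶜ.indicator v := by
    funext ω
    by_cases hω : ω ∈ B <;>
      simp [Set.indicator_apply, hω, Pi.add_apply]
  rw [heq]
  exact ((Lp.memLp u).indicator hB).add ((Lp.memLp v).indicator hB.compl)

theorem convexHull_decomp_two {X : Ω → Set E} {u v : Lp E p μ}
    (hu : u ∈ convexHull ℝ (SelLp μ p X)) (hv : v ∈ convexHull ℝ (SelLp μ p X))
    {B : Set Ω} (hB : MeasurableSet B) {h : Lp E p μ}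
    (hh : (h : Ω → E) =ᵐ[μ] fun ω => if ω ∈ B then (u : Ω → E) ω else (v : Ω → E) ω) :
    h ∈ convexHull ℝ (SelLp μ p X) := by
  classical
  rw [convexHull_eq] at hu hv
  obtain ⟨ι, t, a, x, ha0, ha1, hx, hu⟩ := hu
  obtain ⟨ι', s, b, y, hb0, hb1, hy, hv⟩ := hv
  have hz : ∀ (i : ι) (j : ι'),
      MemLp (fun ω => if ω ∈ B then (x i : Ω → E) ω else (y j : Ω → E) ω) p μ :=
    fun i j => memℒp_piecewise hB
  have hsum1 : ∑ q ∈ t ×ˢ s, a q.1 * b q.2 = 1 := by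
    rw [Finset.sum_product, ← Finset.sum_mul_sum, ha1, hb1, one_mul]
  rw [convexHull_eq]
  refine ⟨ι × ι', t ×ˢ s, fun q => a q.1 * b q.2, fun q => (hz q.1 q.2).toLp _,
    ?_, hsum1, ?_, ?_⟩
  · rintro ⟨i, j⟩ hij
    rw [Finset.mem_product] at hij
    exact mul_nonneg (ha0 _ hij.1) (hb0 _ hij.2)
  · rintro ⟨i, j⟩ hij
    rw [Finset.mem_product] at hij
    show ∀ᵐ ω ∂μ, _ ∈ X ω
    filter_upwards [MemLp.coeFn_toLp (hz i j), hx i hij.1, hy j hij.2] with ω h1 h2 h3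
    rw [h1]
    split_ifs
    exacts [h2, h3]
  · -- the centerMass equals h
    symm
    apply Lp.ext
    rw [Finset.centerMass_eq_of_sum_1 _ _ hsum1]
    have hcm : ⇑(∑ q ∈ t ×ˢ s, (a q.1 * b q.2) • (hz q.1 q.2).toLp _) =ᵐ[μ]
        fun ω => ∑ q ∈ t ×ˢ s, (a q.1 * b q.2) •
          ((hz q.1 q.2).toLp _ : Ω → E) ω :=
      Lp.coeFn_finset_sum_smul _ _ _
    have hucm : (u : Ω → E) =ᵐ[μ] fun ω => ∑ i ∈ t, a i • (x i : Ω → E) ω := by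
      rw [← hu, Finset.centerMass_eq_of_sum_1 _ _ ha1]
      exact Lp.coeFn_finset_sum_smul _ _ _
    have hvcm : (v : Ω → E) =ᵐ[μ] fun ω => ∑ j ∈ s, b j • (y j : Ω → E) ω := by
      rw [← hv, Finset.centerMass_eq_of_sum_1 _ _ hb1]
      exact Lp.coeFn_finset_sum_smul _ _ _
    have hall : ∀ᵐ ω ∂μ, ∀ q ∈ t ×ˢ s,
        ((hz q.1 q.2).toLp _ : Ω → E) ω
          = if ω ∈ B then (x q.1 : Ω → E) ω else (y q.2 : Ω → E) ω := by
      rw [Filter.eventually_all_finset]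
      rintro ⟨i, j⟩ hij
      exact MemLp.coeFn_toLp (hz i j)
    filter_upwards [hcm, hucm, hvcm, hall, hh] with ω h1 h2 h3 h4 h5
    rw [h1, h5]
    by_cases hω : ω ∈ B
    · rw [if_pos hω, h2, Finset.sum_product]
      refine Finset.sum_congr rfl fun i hi => ?_
      have : ∀ j ∈ s, (a i * b j) • (((hz i j).toLp _ : Lp E p μ) : Ω → E) ω
          = (a i * b j) • (x i : Ω → E) ω := by
        intro j hj
        rw [h4 (i, j) (Finset.mem_product.2 ⟨hi, hj⟩), if_pos hω]
      rw [Finset.sum_congr rfl this, ← Finset.sum_smul, ← Finset.mul_sum, hb1, mul_one]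
    · rw [if_neg hω, h3, Finset.sum_product_right]
      refine Finset.sum_congr rfl fun j hj => ?_
      have : ∀ i ∈ t, (a i * b j) • (((hz i j).toLp _ : Lp E p μ) : Ω → E) ω
          = (a i * b j) • (y j : Ω → E) ω := by
        intro i hi
        rw [h4 (i, j) (Finset.mem_product.2 ⟨hi, hj⟩), if_neg hω]
      rw [Finset.sum_congr rfl this, ← Finset.sum_smul]
      congr 1
      rw [← Finset.sum_mul, ha1, one_mul]

theorem memℒp_glue (D : ℕ → Lp E p μ) {τ : Ω → ℕ} (hτ : Measurable τ) (N : ℕ)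
    (hτle : ∀ ω, τ ω ≤ N) :
    MemLp (fun ω => (D (τ ω) : Ω → E) ω) p μ := by
  letI : MeasurableSpace E := borel E
  haveI : BorelSpace E := ⟨rfl⟩
  have hsm : AEStronglyMeasurable (fun ω => (D (τ ω) : Ω → E) ω) μ :=
    (measurable_natglue (fun t => (Lp.stronglyMeasurable (D t)).measurable)
      hτ).stronglyMeasurable.aestronglyMeasurable
  refine MemLp.of_le (g := fun ω => ∑ t ∈ Finset.range (N+1), ‖(D t : Ω → E) ω‖)
    ?_ hsm ?_
  · apply memLp_finset_sum
    intro t _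
    exact (Lp.memLp (D t)).norm
  · filter_upwards with ω
    refine le_trans ?_ (le_abs_self _)
    exact Finset.single_le_sum (f := fun t => ‖(D t : Ω → E) ω‖)
      (fun t _ => norm_nonneg _) (Finset.mem_range.2 (Nat.lt_succ_of_le (hτle ω)))

theorem glue_mem_convexHull {X : Ω → Set E} (N : ℕ) :
    ∀ (D : ℕ → Lp E p μ), (∀ t, D t ∈ convexHull ℝ (SelLp μ p X)) →
    ∀ (τ : Ω → ℕ), Measurable τ → (∀ ω, τ ω ≤ N) →
    ∀ (h : Lp E p μ), ((h : Ω → E) =ᵐ[μ] fun ω => (D (τ ω) : Ω → E) ω) →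
      h ∈ convexHull ℝ (SelLp μ p X) := by
  induction N with
  | zero =>
    intro D hD τ hτ hτle h hh
    have : h = D 0 := by
      apply Lp.ext
      refine hh.trans (Eventually.of_forall fun ω => ?_)
      show (D (τ ω) : Ω → E) ω = (D 0 : Ω → E) ω
      rw [Nat.le_zero.1 (hτle ω)]
    rw [this]
    exact hD 0
  | succ N ih =>
    intro D hD τ hτ hτle h hh
    set τ' : Ω → ℕ := fun ω => min (τ ω) N with hτ'_def
    have hτ'm : Measurable τ' := hτ.min measurable_const
    have hτ'le : ∀ ω, τ' ω ≤ N := fun ω => min_le_right _ _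
    set u : Lp E p μ := (memℒp_glue D hτ'm N hτ'le).toLp _ with hu_def
    have hu_mem : u ∈ convexHull ℝ (SelLp μ p X) :=
      ih D hD τ' hτ'm hτ'le u (MemLp.coeFn_toLp _)
    have hB : MeasurableSet (τ ⁻¹' {N+1}) := hτ (measurableSet_singleton _)
    apply convexHull_decomp_two (hD (N+1)) hu_mem hB (h := h)
    filter_upwards [hh, MemLp.coeFn_toLp (memℒp_glue D hτ'm N hτ'le)] with ω h1 h2
    rw [h1]
    by_cases hω : ω ∈ τ ⁻¹' {N+1}
    · have hω' : τ ω = N + 1 := by simpa using hω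
      rw [if_pos hω, hω']
    · have hω' : ¬ τ ω = N + 1 := by simpa using hω
      rw [if_neg hω]
      show (D (τ ω) : Ω → E) ω = (u : Ω → E) ω
      rw [h2]
      show (D (τ ω) : Ω → E) ω = (D (min (τ ω) N) : Ω → E) ω
      rw [min_eq_left (Nat.lt_succ_iff.1 (lt_of_le_of_ne (hτle ω) hω'))]

end LpGlue



section SelLpBasic

open Set Filter Topology
open scoped ENNReal

variable {Ω : Type*} {mΩ : MeasurableSpace Ω} {μ : Measure Ω} {E : Type*}
  [NormedAddCommGroup E] [NormedSpace ℝ E] {p : ℝ≥0∞}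

theorem selLp_convex [Fact (1 ≤ p)] (C : Ω → Set E) (hC : ∀ᵐ ω ∂μ, Convex ℝ (C ω)) :
    Convex ℝ (SelLp μ p C) := by
  intro f hf g hg a b ha hb hab
  have hf' : ∀ᵐ ω ∂μ, (f : Ω → E) ω ∈ C ω := hf
  have hg' : ∀ᵐ ω ∂μ, (g : Ω → E) ω ∈ C ω := hg
  show ∀ᵐ ω ∂μ, ((a • f + b • g : Lp E p μ) : Ω → E) ω ∈ C ω
  filter_upwards [Lp.coeFn_add (a • f) (b • g), Lp.coeFn_smul a f, Lp.coeFn_smul b g,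
    hf', hg', hC] with ω h1 h2 h3 h4 h5 h6
  rw [h1]
  show ((a • f : Lp E p μ) : Ω → E) ω + ((b • g : Lp E p μ) : Ω → E) ω ∈ C ω
  rw [h2, h3]
  exact h6 h4 h5 ha hb hab

theorem selLp_isClosed [Fact (1 ≤ p)] (C : Ω → Set E) (hC : ∀ᵐ ω ∂μ, IsClosed (C ω)) :
    IsClosed (SelLp μ p C) := by
  refine IsSeqClosed.isClosed ?_
  intro g gl hg hgl
  have h1 : TendstoInMeasure μ (fun n => ⇑(g n)) atTop ⇑gl :=
    tendstoInMeasure_of_tendsto_Lp hgl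
  obtain ⟨ns, -, hns⟩ := h1.exists_seq_tendsto_ae
  have hmem : ∀ᵐ ω ∂μ, ∀ i, (g (ns i) : Ω → E) ω ∈ C ω := ae_all_iff.2 fun i => hg (ns i)
  show ∀ᵐ ω ∂μ, (gl : Ω → E) ω ∈ C ω
  filter_upwards [hmem, hns, hC] with ω h2 h3 h4
  exact h4.mem_of_tendsto h3 (Eventually.of_forall fun i => h2 i)

end SelLpBasic

open Set Filter Topology in
/-- For a closed Effros-measurable random set `X` with `L^p(X) ≠ ∅`:
`L^p(c̄onv X) = c̄onv L^p(X)`, and `X` is a.s. convex iff `L^p(X)` is convex. -/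
theorem selections_closedConvexHull
    {Ω : Type*} {mΩ : MeasurableSpace Ω} {μ : Measure Ω} [IsProbabilityMeasure μ]
    (hμ : μ.IsComplete) {E : Type*} [NormedAddCommGroup E] [NormedSpace ℝ E]
    [CompleteSpace E] [SecondCountableTopology E]
    {p : ℝ≥0∞} [Fact (1 ≤ p)] (hp' : p ≠ ⊤)
    (X : Ω → Set E) (hXcl : ∀ᵐ ω ∂μ, IsClosed (X ω)) (hXm : EffrosMeasurable mΩ X)
    (hne : (SelLp μ p X).Nonempty) :
    SelLp μ p (fun ω => closure (convexHull ℝ (X ω))) =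
      closure (convexHull ℝ (SelLp μ p X)) ∧
    ((∀ᵐ ω ∂μ, Convex ℝ (X ω)) ↔ Convex ℝ (SelLp μ p X)) := by
  classical
  letI : MeasurableSpace E := borel E
  haveI : BorelSpace E := ⟨rfl⟩
  obtain ⟨f₀, hf₀⟩ := hne
  have hf₀' : ∀ᵐ ω ∂μ, (f₀ : Ω → E) ω ∈ X ω := hf₀
  -- modification on a null set
  have hT : ∀ᵐ ω ∂μ, IsClosed (X ω) ∧ (f₀ : Ω → E) ω ∈ X ω := hXcl.and hf₀'
  set T : Set Ω := {ω | IsClosed (X ω) ∧ (f₀ : Ω → E) ω ∈ X ω} with hTdef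
  have hTc_null : μ Tᶜ = 0 := by
    rw [hTdef, compl_setOf]
    exact ae_iff.1 hT
  have hTmeas : MeasurableSet T := by
    have := (hμ.out _ hTc_null).compl
    rwa [compl_compl] at this
  have hTae : ∀ᵐ ω ∂μ, ω ∈ T := hT
  set X' : Ω → Set E := fun ω => if ω ∈ T then X ω else {(f₀ : Ω → E) ω} with hX'def
  have hX'cl : ∀ ω, IsClosed (X' ω) := by
    intro ω
    rw [hX'def]
    dsimp only
    split_ifs with h
    · exact h.1
    · exact isClosed_singleton
  have hX'ne : ∀ ω, (X' ω).Nonempty := by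
    intro ω
    rw [hX'def]
    dsimp only
    split_ifs with h
    · exact ⟨(f₀ : Ω → E) ω, h.2⟩
    · exact Set.singleton_nonempty _
  have hX'eff : EffrosMeasurable mΩ X' := by
    intro U hU
    have heq : {ω | (X' ω ∩ U).Nonempty}
        = (T ∩ {ω | (X ω ∩ U).Nonempty}) ∪ (Tᶜ ∩ (fun ω => (f₀ : Ω → E) ω) ⁻¹' U) := by
      ext ω
      by_cases h : ω ∈ T
      · have hx : X' ω = X ω := by rw [hX'def]; exact if_pos h
        simp [hx, h]
      · have hx : X' ω = {(f₀ : Ω → E) ω} := by rw [hX'def]; exact if_neg h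
        simp [hx, h, Set.singleton_inter_nonempty]
    rw [heq]
    exact (hTmeas.inter (hXm U hU)).union
      (hTmeas.compl.inter ((Lp.stronglyMeasurable f₀).measurable hU.measurableSet))
  have hX'X : ∀ᵐ ω ∂μ, X' ω = X ω := by
    filter_upwards [hTae] with ω h
    rw [hX'def]
    exact if_pos h
  -- Castaing representation and truncations
  obtain ⟨ξ, hξsm, hξmem, hξdense⟩ := exists_castaing hX'eff hX'cl hX'ne
  set ζ : ℕ → Ω → E := fun n ω =>
    if ‖ξ n.unpair.1 ω‖ ≤ (n.unpair.2 : ℝ) then ξ n.unpair.1 ω else (f₀ : Ω → E) ω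
    with hζdef
  have hζsm : ∀ n, StronglyMeasurable (ζ n) := by
    intro n
    exact StronglyMeasurable.ite
      (measurableSet_le (hξsm _).measurable.norm measurable_const)
      (hξsm _) (Lp.stronglyMeasurable f₀)
  have hζmemLp : ∀ n, MemLp (ζ n) p μ := by
    intro n
    refine MemLp.of_le (g := fun ω => ‖(f₀ : Ω → E) ω‖ + (n.unpair.2 : ℝ))
      (((Lp.memLp f₀).norm).add (memLp_const _)) (hζsm n).aestronglyMeasurable ?_
    filter_upwards with ω
    have hb : ‖ζ n ω‖ ≤ ‖(f₀ : Ω → E) ω‖ + (n.unpair.2 : ℝ) := by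
      rw [hζdef]
      dsimp only
      split_ifs with h
      · have h2 : (0:ℝ) ≤ ‖(f₀ : Ω → E) ω‖ := norm_nonneg _
        linarith
      · have h2 : (0:ℝ) ≤ (n.unpair.2 : ℝ) := Nat.cast_nonneg _
        linarith
    calc ‖ζ n ω‖ ≤ ‖(f₀ : Ω → E) ω‖ + (n.unpair.2 : ℝ) := hb
      _ ≤ ‖‖(f₀ : Ω → E) ω‖ + (n.unpair.2 : ℝ)‖ := le_abs_self _
  have hζmem : ∀ᵐ ω ∂μ, ∀ n, ζ n ω ∈ X ω := by
    filter_upwards [hTae, hX'X] with ω h1 h2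
    intro n
    rw [hζdef]
    dsimp only
    split_ifs with h
    · have := hξmem n.unpair.1 ω
      rwa [h2] at this
    · exact h1.2
  have hζdense' : ∀ᵐ ω ∂μ, ∀ x ∈ X ω, ∀ ε > 0, ∃ n, dist (ζ n ω) x < ε := by
    filter_upwards [hX'X] with ω h2
    intro x hx ε hε
    obtain ⟨k, hk⟩ := hξdense ω x (by rwa [h2]) ε hε
    refine ⟨Nat.pair k ⌈‖ξ k ω‖⌉₊, ?_⟩
    have hζeq : ζ (Nat.pair k ⌈‖ξ k ω‖⌉₊) ω = ξ k ω := by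
      rw [hζdef]
      dsimp only
      rw [Nat.unpair_pair]
      dsimp only
      rw [if_pos (Nat.le_ceil _)]
    rw [hζeq]
    exact hk
  -- Lp versions of the truncated selections
  set Z : ℕ → Lp E p μ := fun n => (hζmemLp n).toLp _ with hZdef
  have hZmem : ∀ n, Z n ∈ SelLp μ p X := by
    intro n
    show ∀ᵐ ω ∂μ, (Z n : Ω → E) ω ∈ X ω
    filter_upwards [MemLp.coeFn_toLp (hζmemLp n), hζmem] with ω h1 h2
    rw [h1]
    exact h2 n
  -- the countable family of rational convex combinations
  set dec : ℕ → List (ℚ × ℕ) := fun t => (Denumerable.eqv (List (ℚ × ℕ))).symm t with hdec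
  set dfun : ℕ → Ω → E := fun t ω =>
    if ValidL (dec t) then ((dec t).map fun pr => (pr.1 : ℝ) • ζ pr.2 ω).sum else ζ 0 ω
    with hdfun
  have hcombo_sm : ∀ L : List (ℚ × ℕ),
      StronglyMeasurable (fun ω => (L.map fun pr => (pr.1 : ℝ) • ζ pr.2 ω).sum) := by
    intro L
    induction L with
    | nil => simpa using stronglyMeasurable_const
    | cons a l ih =>
      simp only [List.map_cons, List.sum_cons]
      exact ((hζsm a.2).const_smul _).add ih
  have hcombo_mem : ∀ L : List (ℚ × ℕ),
      MemLp (fun ω => (L.map fun pr => (pr.1 : ℝ) • ζ pr.2 ω).sum) p μ := by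
    intro L
    induction L with
    | nil => simpa using memLp_const (0 : E)
    | cons a l ih =>
      simp only [List.map_cons, List.sum_cons]
      exact ((hζmemLp a.2).const_smul _).add ih
  have hdfun_sm : ∀ t, StronglyMeasurable (dfun t) := by
    intro t
    rw [hdfun]
    dsimp only
    split_ifs
    · exact hcombo_sm _
    · exact hζsm 0
  have hdfun_mem : ∀ t, MemLp (dfun t) p μ := by
    intro t
    rw [hdfun]
    dsimp only
    split_ifs
    · exact hcombo_mem _
    · exact hζmemLp 0
  set D : ℕ → Lp E p μ := fun t => (hdfun_mem t).toLp _ with hD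
  have hDcoe : ∀ t, (D t : Ω → E) =ᵐ[μ] dfun t := fun t => MemLp.coeFn_toLp _
  have hDhull : ∀ t, D t ∈ convexHull ℝ (SelLp μ p X) := by
    intro t
    by_cases hval : ValidL (dec t)
    · set L := dec t with hL
      have hsum_fin : ∑ i : Fin L.length, ((L.get i).1 : ℝ) = 1 := by
        have h1 : ((L.map Prod.fst).sum : ℚ) = 1 := hval.2
        rw [list_map_sum_fin L Prod.fst] at h1
        exact_mod_cast h1
      have heq : D t = (Finset.univ : Finset (Fin L.length)).centerMass
          (fun i => ((L.get i).1 : ℝ)) (fun i => Z (L.get i).2) := by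
        apply Lp.ext
        rw [Finset.centerMass_eq_of_sum_1 _ _ hsum_fin]
        have h3 := Lp.coeFn_finset_sum_smul (Finset.univ : Finset (Fin L.length))
          (fun i => ((L.get i).1 : ℝ)) (fun i => Z (L.get i).2)
        have h4 : ∀ᵐ ω ∂μ, ∀ i : Fin L.length,
            (Z (L.get i).2 : Ω → E) ω = ζ (L.get i).2 ω := by
          rw [eventually_all]
          intro i
          exact MemLp.coeFn_toLp _
        filter_upwards [hDcoe t, h3, h4] with ω h5 h6 h7
        rw [h5, h6]
        rw [hdfun]
        dsimp only
        rw [if_pos hval]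
        rw [list_map_sum_fin L (fun pr => (pr.1 : ℝ) • ζ pr.2 ω)]
        exact Finset.sum_congr rfl fun i _ => by rw [h7 i]
      rw [heq]
      apply Finset.centerMass_mem_convexHull
      · intro i _
        exact_mod_cast hval.1 (L.get i) (L.get_mem i)
      · rw [hsum_fin]; exact one_pos
      · intro i _
        exact hZmem _
    · have heq : D t = Z 0 := by
        apply Lp.ext
        filter_upwards [hDcoe t, MemLp.coeFn_toLp (hζmemLp 0)] with ω h1 h2
        rw [h1, h2]
        rw [hdfun]
        dsimp only
        rw [if_neg hval]
      rw [heq]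
      exact subset_convexHull _ _ (hZmem 0)
  have hDdense : ∀ᵐ ω ∂μ, ∀ x ∈ closure (convexHull ℝ (X ω)), ∀ ε > 0,
      ∃ t, dist (dfun t ω) x < ε := by
    filter_upwards [hζdense'] with ω h1
    intro x hx ε hε
    obtain ⟨L, hLval, hLdist⟩ := dense_ratCombo (X ω) (fun n => ζ n ω) h1 hx hε
    refine ⟨Denumerable.eqv (List (ℚ × ℕ)) L, ?_⟩
    have hdecL : dec ((Denumerable.eqv (List (ℚ × ℕ))) L) = L := by
      rw [hdec]
      exact Equiv.symm_apply_apply _ _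
    have : dfun ((Denumerable.eqv (List (ℚ × ℕ))) L) ω
        = ((L.map fun pr => (pr.1 : ℝ) • ζ pr.2 ω)).sum := by
      rw [hdfun]
      dsimp only
      rw [hdecL, if_pos hLval]
    rw [this]
    exact hLdist
  -- the two inclusions
  set F : Ω → Set E := fun ω => closure (convexHull ℝ (X ω)) with hF
  have hFX : SelLp μ p X ⊆ SelLp μ p F := by
    intro g hg
    have hg' : ∀ᵐ ω ∂μ, (g : Ω → E) ω ∈ X ω := hg
    show ∀ᵐ ω ∂μ, (g : Ω → E) ω ∈ F ω
    filter_upwards [hg'] with ω h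
    exact subset_closure (subset_convexHull ℝ _ h)
  have hFconv : Convex ℝ (SelLp μ p F) :=
    selLp_convex F (Eventually.of_forall fun ω => (convex_convexHull ℝ (X ω)).closure)
  have hFclosed : IsClosed (SelLp μ p F) :=
    selLp_isClosed F (Eventually.of_forall fun ω => isClosed_closure)
  have hsup : closure (convexHull ℝ (SelLp μ p X)) ⊆ SelLp μ p F :=
    closure_minimal (convexHull_min hFX hFconv) hFclosed
  have hsub : SelLp μ p F ⊆ closure (convexHull ℝ (SelLp μ p X)) := by
    intro f hf
    have hf' : ∀ᵐ ω ∂μ, (f : Ω → E) ω ∈ F ω := hf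
    rw [Metric.mem_closure_iff]
    intro ε hε
    set P : ℕ → Ω → Prop := fun t ω => dist ((f : Ω → E) ω) (dfun t ω) < ε/3 with hP
    have hPmeas : ∀ t, MeasurableSet {ω | P t ω} := by
      intro t
      have hd : Measurable fun ω => dist ((f : Ω → E) ω) (dfun t ω) :=
        ((Lp.stronglyMeasurable f).dist (hdfun_sm t)).measurable
      exact measurableSet_lt hd measurable_const
    have hfull : ∀ᵐ ω ∂μ, ∃ t, P t ω := by
      filter_upwards [hDdense, hf'] with ω h1 h2
      obtain ⟨t, ht⟩ := h1 ((f : Ω → E) ω) h2 (ε/3) (by linarith)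
      exact ⟨t, by rw [hP]; dsimp only; rw [dist_comm]; exact ht⟩
    obtain ⟨δ, hδpos, hδ⟩ := MemLp.eLpNorm_indicator_le (Fact.out) hp'
      ((Lp.memLp (D 0)).sub (Lp.memLp f)) (show (0:ℝ) < ε/3 by linarith)
    set A : ℕ → Set Ω := fun N => ⋃ t ∈ Finset.range N, {ω | P t ω} with hA
    have hAmeas : ∀ N, MeasurableSet (A N) := fun N =>
      MeasurableSet.biUnion (Finset.range N).countable_toSet fun t _ => hPmeas t
    have hmono : Antitone fun N => (A N)ᶜ := by
      intro a b hab
      apply Set.compl_subset_compl.2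
      apply Set.biUnion_subset_biUnion_left
      intro t ht
      exact Finset.mem_coe.2 (Finset.mem_range.2 (lt_of_lt_of_le
        (Finset.mem_range.1 (Finset.mem_coe.1 ht)) hab))
    have hInull : μ (⋂ N, (A N)ᶜ) = 0 := by
      refine measure_mono_null ?_ (ae_iff.1 hfull)
      intro ω hω
      simp only [Set.mem_iInter, Set.mem_compl_iff, hA, Set.mem_iUnion] at hω
      show ¬ ∃ t, P t ω
      rintro ⟨t, ht⟩
      exact hω (t+1) ⟨t, Finset.mem_range.2 (Nat.lt_succ_self t), ht⟩
    have htend : Tendsto (fun N => μ ((A N)ᶜ)) atTop (𝓝 0) := by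
      have h0 := tendsto_measure_iInter_atTop
        (fun N => (hAmeas N).compl.nullMeasurableSet) hmono ⟨0, measure_ne_top μ _⟩
      rwa [hInull] at h0
    have hδ0 : (0:ℝ≥0∞) < ENNReal.ofReal δ := ENNReal.ofReal_pos.2 hδpos
    obtain ⟨N, hN⟩ := (htend.eventually_lt_const hδ0).exists
    set R : ℕ → Ω → Prop := fun t ω => (t < N ∧ P t ω) ∨ t = N with hR
    have hRtotal : ∀ ω, ∃ t, R t ω := fun ω => ⟨N, Or.inr rfl⟩
    have hRmeas : ∀ t, MeasurableSet {ω | R t ω} := by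
      intro t
      by_cases ht : t = N
      · have : {ω | R t ω} = Set.univ := by
          ext ω; simp [hR, ht]
        rw [this]; exact MeasurableSet.univ
      · by_cases ht2 : t < N
        · have : {ω | R t ω} = {ω | P t ω} := by
            ext ω; simp [hR, ht, ht2]
          rw [this]; exact hPmeas t
        · have : {ω | R t ω} = ∅ := by
            ext ω; simp [hR, ht, ht2]
          rw [this]; exact MeasurableSet.empty
    set τ : Ω → ℕ := fun ω => Nat.find (hRtotal ω) with hτ
    have hτmeas : Measurable τ := measurable_find hRtotal hRmeas
    have hτle : ∀ ω, τ ω ≤ N := fun ω => Nat.find_le (Or.inr rfl)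
    set Dg : ℕ → Lp E p μ := fun t => if t < N then D t else D 0 with hDg
    have hDghull : ∀ t, Dg t ∈ convexHull ℝ (SelLp μ p X) := by
      intro t
      rw [hDg]
      dsimp only
      split_ifs
      · exact hDhull t
      · exact hDhull 0
    set g : Lp E p μ := (memℒp_glue Dg hτmeas N hτle).toLp _ with hgdef
    have hghull : g ∈ convexHull ℝ (SelLp μ p X) :=
      glue_mem_convexHull N Dg hDghull τ hτmeas hτle g (MemLp.coeFn_toLp _)
    refine ⟨g, hghull, ?_⟩
    -- now the norm estimate
    set φ₂ : Ω → ℝ := (A N)ᶜ.indicator fun ω => ‖(D 0 : Ω → E) ω - (f : Ω → E) ω‖ with hφ₂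
    have hptwise : ∀ᵐ ω ∂μ, ‖((f : Ω → E) - (g : Ω → E)) ω‖ ≤ ‖ε/3 + φ₂ ω‖ := by
      filter_upwards [MemLp.coeFn_toLp (memℒp_glue Dg hτmeas N hτle),
        ae_all_iff.2 hDcoe] with ω h1 h2
      have hφ₂0 : 0 ≤ φ₂ ω := by
        rw [hφ₂]
        exact Set.indicator_nonneg (fun _ _ => norm_nonneg _) _
      have habs : ‖ε/3 + φ₂ ω‖ = ε/3 + φ₂ ω := by
        rw [Real.norm_eq_abs, abs_of_nonneg (by linarith)]
      rw [habs]
      show ‖(f : Ω → E) ω - (g : Ω → E) ω‖ ≤ ε/3 + φ₂ ω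
      rw [h1]
      by_cases hω : ∃ t, t < N ∧ P t ω
      · obtain ⟨t0, ht0N, ht0P⟩ := hω
        have hτlt : τ ω < N := lt_of_le_of_lt (Nat.find_le (Or.inl ⟨ht0N, ht0P⟩)) ht0N
        have hRτ : R (τ ω) ω := Nat.find_spec (hRtotal ω)
        have hPτ : P (τ ω) ω := by
          have hne : τ ω ≠ N := Nat.ne_of_lt hτlt
          rcases hRτ with h | h
          · exact h.2
          · exact absurd h hne
        have hDgτ : Dg (τ ω) = D (τ ω) := if_pos hτlt
        rw [hDgτ, h2 (τ ω)]
        have hd : ‖(f : Ω → E) ω - dfun (τ ω) ω‖ < ε/3 := by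
          rw [← dist_eq_norm]
          exact hPτ
        linarith
      · have hτN : τ ω = N := by
          have hspec : R (τ ω) ω := Nat.find_spec (hRtotal ω)
          rcases Nat.lt_or_ge (τ ω) N with h | h
          · exfalso
            rcases hspec with h' | h'
            · exact hω ⟨τ ω, h'.1, h'.2⟩
            · exact absurd h' (Nat.ne_of_lt h)
          · exact le_antisymm (hτle ω) h
        have hDgτ : Dg (τ ω) = D 0 := by
          rw [hτN, hDg]
          dsimp only
          rw [if_neg (lt_irrefl N)]
        rw [hDgτ]
        have hmemA : ω ∈ (A N)ᶜ := by
          intro hmem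
          rw [hA] at hmem
          simp only [Set.mem_iUnion] at hmem
          obtain ⟨t, ht1, ht2⟩ := hmem
          exact hω ⟨t, Finset.mem_range.1 ht1, ht2⟩
        have hφval : φ₂ ω = ‖(D 0 : Ω → E) ω - (f : Ω → E) ω‖ := by
          rw [hφ₂]
          exact Set.indicator_of_mem hmemA _
        rw [hφval, norm_sub_rev]
        linarith
    have h1 : eLpNorm ((f : Ω → E) - (g : Ω → E)) p μ
        ≤ eLpNorm (fun ω => ε/3 + φ₂ ω) p μ := eLpNorm_mono_ae hptwise
    have hφ₂meas : AEStronglyMeasurable φ₂ μ := by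
      rw [hφ₂]
      exact (((Lp.stronglyMeasurable (D 0)).sub
        (Lp.stronglyMeasurable f)).norm.indicator (hAmeas N).compl).aestronglyMeasurable
    have h2 : eLpNorm (fun ω => ε/3 + φ₂ ω) p μ
        ≤ eLpNorm (fun _ : Ω => ε/3) p μ + eLpNorm φ₂ p μ :=
      eLpNorm_add_le aestronglyMeasurable_const hφ₂meas (Fact.out)
    have hp0 : p ≠ 0 := by
      have h := (Fact.out : 1 ≤ p)
      intro hc
      rw [hc] at h
      exact absurd h (by simp)
    have hμ0 : μ ≠ 0 := IsProbabilityMeasure.ne_zero μ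
    have h3 : eLpNorm (fun _ : Ω => ε/3) p μ = ENNReal.ofReal (ε/3) := by
      rw [eLpNorm_const _ hp0 hμ0]
      simp only [measure_univ, ENNReal.one_rpow, mul_one]
      rw [← ofReal_norm_eq_enorm, Real.norm_eq_abs,
        abs_of_nonneg (by linarith : (0:ℝ) ≤ ε/3)]
    have h4 : eLpNorm φ₂ p μ ≤ ENNReal.ofReal (ε/3) := by
      have h5 : eLpNorm φ₂ p μ
          = eLpNorm ((A N)ᶜ.indicator ((D 0 : Ω → E) - (f : Ω → E))) p μ := by
        calc eLpNorm φ₂ p μ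
            = eLpNorm (fun ω => ‖((A N)ᶜ.indicator ((D 0 : Ω → E) - (f : Ω → E))) ω‖) p μ := by
              apply eLpNorm_congr_ae
              filter_upwards with ω
              rw [hφ₂]
              exact (norm_indicator_eq_indicator_norm _ _).symm
          _ = eLpNorm ((A N)ᶜ.indicator ((D 0 : Ω → E) - (f : Ω → E))) p μ := eLpNorm_norm _
      rw [h5]
      exact hδ _ (hAmeas N).compl (le_of_lt hN)
    have h6 : eLpNorm ((f : Ω → E) - (g : Ω → E)) p μ
        ≤ ENNReal.ofReal (ε/3) + ENNReal.ofReal (ε/3) := by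
      refine le_trans h1 (le_trans h2 ?_)
      rw [h3]
      exact add_le_add le_rfl h4
    have h7 : dist f g < ε := by
      rw [Lp.dist_def]
      have h9 : (eLpNorm ((f : Ω → E) - (g : Ω → E)) p μ).toReal
          ≤ (ENNReal.ofReal (ε/3) + ENNReal.ofReal (ε/3)).toReal := by
        apply ENNReal.toReal_mono _ h6
        exact (ENNReal.add_lt_top.2 ⟨ENNReal.ofReal_lt_top, ENNReal.ofReal_lt_top⟩).ne
      rw [ENNReal.toReal_add ENNReal.ofReal_ne_top ENNReal.ofReal_ne_top,
        ENNReal.toReal_ofReal (by linarith : (0:ℝ) ≤ ε/3)] at h9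
      linarith
    exact h7
  have hmain : SelLp μ p F = closure (convexHull ℝ (SelLp μ p X)) :=
    Set.Subset.antisymm hsub hsup
  refine ⟨hmain, ?_, ?_⟩
  · intro hconv
    exact selLp_convex X hconv
  · intro hAconv
    have hXclosed : IsClosed (SelLp μ p X) := selLp_isClosed X hXcl
    have hDX : ∀ t, D t ∈ SelLp μ p X := by
      intro t
      have h := hDhull t
      rwa [hAconv.convexHull_eq] at h
    have hdfunX : ∀ᵐ ω ∂μ, ∀ t, dfun t ω ∈ X ω := by
      have h1 : ∀ᵐ ω ∂μ, ∀ t, (D t : Ω → E) ω ∈ X ω := ae_all_iff.2 fun t => hDX t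
      filter_upwards [h1, ae_all_iff.2 hDcoe] with ω h2 h3 t
      rw [← h3 t]
      exact h2 t
    filter_upwards [hdfunX, hDdense, hXcl] with ω h1 h2 h3
    have hsub1 : closure (convexHull ℝ (X ω)) ⊆ X ω := by
      intro x hx
      have hxc : x ∈ closure (X ω) := by
        rw [Metric.mem_closure_iff]
        intro ε' hε'
        obtain ⟨t, ht⟩ := h2 x hx ε' hε'
        exact ⟨dfun t ω, h1 t, by rwa [dist_comm]⟩
      rwa [h3.closure_eq] at hxc
    have heq : X ω = closure (convexHull ℝ (X ω)) :=
      Set.Subset.antisymm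
        (fun x hx => subset_closure (subset_convexHull ℝ _ hx)) hsub1
    rw [heq]
    exact (convex_convexHull ℝ (X ω)).closure
end

section
/- Let X be a closed random set with cl_p dec(A) = L^p(X) for a nonempty A ⊆ L^p(Ω;E). Then the strong-L^0 closure of dec(A) equals L^0(X): cl_0 dec(A) = L^0(X). Consequently chd_p(A) = chd_0(A) ∩ L^p(Ω;E). -/
open MeasureTheory
open scoped ENNReal

/-- The closure of a set of `L^p` functions in `L^0`, i.e. with respect to convergence in
probability (in measure), viewed inside the space of a.e.-equivalence classes. -/
def cl0 {Ω : Type*} {mΩ : MeasurableSpace Ω} (μ : Measure Ω) {E : Type*}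
    [NormedAddCommGroup E] {p : ℝ≥0∞} (S : Set (Lp E p μ)) : Set (Ω →ₘ[μ] E) :=
  {g : Ω →ₘ[μ] E | ∃ f : ℕ → Lp E p μ, (∀ n, f n ∈ S) ∧
    TendstoInMeasure μ (fun n => ⇑(f n)) Filter.atTop ⇑g}

/-- The set of `L^0` selections of the multifunction `X`. -/
def Sel0 {Ω : Type*} {mΩ : MeasurableSpace Ω} (μ : Measure Ω) {E : Type*}
    [NormedAddCommGroup E] (X : Ω → Set E) : Set (Ω →ₘ[μ] E) :=
  {g : Ω →ₘ[μ] E | ∀ᵐ ω ∂μ, g ω ∈ X ω}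


open Filter in
private lemma tendstoInMeasure_triangle' {Ω : Type*} {mΩ : MeasurableSpace Ω} {μ : Measure Ω}
    {E : Type*} [NormedAddCommGroup E] {f g : ℕ → Ω → E} {h : Ω → E}
    (h1 : TendstoInMeasure μ (fun n => f n - g n) atTop (0 : Ω → E))
    (h2 : TendstoInMeasure μ g atTop h) :
    TendstoInMeasure μ f atTop h := by
  intro ε hε
  have h1' := h1 (ε / 2) (ENNReal.half_pos hε.ne')
  have h2' := h2 (ε / 2) (ENNReal.half_pos hε.ne')
  have hsub : ∀ n, {ω | ε ≤ edist (f n ω) (h ω)} ⊆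
      {ω | ε / 2 ≤ edist ((f n - g n) ω) ((0 : Ω → E) ω)} ∪
        {ω | ε / 2 ≤ edist (g n ω) (h ω)} := by
    intro n ω hω
    by_contra hc
    simp only [Set.mem_union, Set.mem_setOf_eq, not_or, not_le, Pi.sub_apply,
      Pi.zero_apply] at hc
    have ht := edist_triangle (f n ω) (g n ω) (h ω)
    have he : edist (f n ω - g n ω) 0 = edist (f n ω) (g n ω) := by
      rw [edist_zero_right, edist_eq_enorm_sub]
    have hω' : ε ≤ edist (f n ω) (h ω) := hω
    have hlt := ENNReal.add_lt_add (he ▸ hc.1) hc.2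
    rw [ENNReal.add_halves] at hlt
    exact absurd (hω'.trans ht) (not_le.2 hlt)
  refine tendsto_of_tendsto_of_tendsto_of_le_of_le tendsto_const_nhds ?_ (fun n => zero_le)
    (fun n => (measure_mono (hsub n)).trans (measure_union_le _ _))
  simpa using h1'.add h2'

/-- If `cl_p (dec A) = L^p(X)` for a closed random set `X` and nonempty `A ⊆ L^p(Ω;E)`,
then `cl_0 (dec A) = L^0(X)`; consequently `chd_p A = chd_0 A ∩ L^p(Ω;E)`. -/
theorem cl0_decHull_eq_Sel0
    {Ω : Type*} {mΩ : MeasurableSpace Ω} {μ : Measure Ω} [IsProbabilityMeasure μ]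
    (hμ : μ.IsComplete) {E : Type*} [NormedAddCommGroup E] [NormedSpace ℝ E]
    [CompleteSpace E] [SecondCountableTopology E]
    {p : ℝ≥0∞} [Fact (1 ≤ p)] (hp' : p ≠ ⊤)
    (A : Set (Lp E p μ)) (hA : A.Nonempty)
    (X : Ω → Set E) (hXcl : ∀ᵐ ω ∂μ, IsClosed (X ω))
    (hX : closure (decHull A) = SelLp μ p X) :
    cl0 μ (decHull A) = Sel0 μ X ∧
    (fun h : Lp E p μ => (h : Ω →ₘ[μ] E)) '' closure (decHull A) =
      cl0 μ (decHull A) ∩ {g : Ω →ₘ[μ] E | MemLp (⇑g) p μ} := by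
  classical
  obtain ⟨f₀, hf₀A⟩ := hA
  have hAdec : A ⊆ decHull A := fun x hx => Set.mem_sInter.2 fun C hC => hC.1 hx
  have hsel : decHull A ⊆ SelLp μ p X := hX ▸ subset_closure
  have part1 : cl0 μ (decHull A) = Sel0 μ X := by
    apply Set.Subset.antisymm
    · rintro g ⟨f, hf, htend⟩
      obtain ⟨ns, _, htae⟩ := htend.exists_seq_tendsto_ae
      have hmem : ∀ᵐ ω ∂μ, ∀ i, f (ns i) ω ∈ X ω :=
        ae_all_iff.2 fun i => hsel (hf (ns i))
      filter_upwards [htae, hmem, hXcl] with ω hω hmemω hcl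
      exact hcl.mem_of_tendsto hω (Filter.Eventually.of_forall hmemω)
    · intro g hg
      have hgX : ∀ᵐ ω ∂μ, g ω ∈ X ω := hg
      have hsm : StronglyMeasurable (⇑g) := g.stronglyMeasurable
      set B : ℕ → Set Ω := fun n => {ω | ‖g ω‖ ≤ (n : ℝ)} with hB
      have hBmeas : ∀ n, MeasurableSet (B n) := fun n =>
        measurableSet_le hsm.norm.measurable measurable_const
      set u : ℕ → Ω → E := fun n => (B n).indicator ⇑g + (B n)ᶜ.indicator ⇑f₀ with hu
      have huval : ∀ n ω, ω ∈ B n → u n ω = g ω := by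
        intro n ω hω
        simp only [hu, Pi.add_apply, Set.indicator_of_mem hω,
          Set.indicator_of_notMem (Set.notMem_compl_iff.2 hω), add_zero]
      have huval' : ∀ n ω, ω ∉ B n → u n ω = f₀ ω := by
        intro n ω hω
        simp only [hu, Pi.add_apply, Set.indicator_of_notMem hω,
          Set.indicator_of_mem (Set.mem_compl hω), zero_add]
      have hmemu : ∀ n, MemLp (u n) p μ := by
        intro n
        refine MemLp.add ?_ ((Lp.memLp f₀).indicator (hBmeas n).compl)
        refine MemLp.of_bound (hsm.indicator (hBmeas n)).aestronglyMeasurable (n : ℝ)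
          (Filter.Eventually.of_forall fun ω => ?_)
        by_cases hω : ω ∈ B n
        · rw [Set.indicator_of_mem hω]; exact hω
        · rw [Set.indicator_of_notMem hω]; simpa using (Nat.cast_nonneg n : (0:ℝ) ≤ n)
      set G : ℕ → Lp E p μ := fun n => (hmemu n).toLp (u n) with hG
      have hGsel : ∀ n, G n ∈ SelLp μ p X := by
        intro n
        have hf₀sel : ∀ᵐ ω ∂μ, f₀ ω ∈ X ω := hsel (hAdec hf₀A)
        filter_upwards [(hmemu n).coeFn_toLp, hgX, hf₀sel] with ω heq hgω hfω
        rw [heq]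
        by_cases hω : ω ∈ B n
        · rw [huval n ω hω]; exact hgω
        · rw [huval' n ω hω]; exact hfω
      have hutend : ∀ ω, Filter.Tendsto (fun n => u n ω) Filter.atTop (nhds (g ω)) := by
        intro ω
        refine Filter.Tendsto.congr' ?_ tendsto_const_nhds
        filter_upwards [Filter.eventually_ge_atTop ⌈‖g ω‖⌉₊] with n hn
        have hω : ω ∈ B n := (Nat.le_ceil _).trans (Nat.cast_le.2 hn)
        exact (huval n ω hω).symm
      have hGtend : TendstoInMeasure μ (fun n => ⇑(G n)) Filter.atTop ⇑g := by
        refine TendstoInMeasure.congr_left (fun n => ((hmemu n).coeFn_toLp).symm) ?_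
        exact tendstoInMeasure_of_tendsto_ae (fun n => (hmemu n).aestronglyMeasurable)
          (Filter.Eventually.of_forall hutend)
      have hGclos : ∀ n, G n ∈ closure (decHull A) := by
        intro n; rw [hX]; exact hGsel n
      have hchoice : ∀ n : ℕ, ∃ h ∈ decHull A, dist (G n) h < 1 / ((n : ℝ) + 1) := fun n =>
        Metric.mem_closure_iff.1 (hGclos n) _ (by positivity)
      choose v hv hvd using hchoice
      refine ⟨v, hv, ?_⟩
      have hd : Filter.Tendsto (fun n => v n - G n) Filter.atTop (nhds (0 : Lp E p μ)) := by
        rw [tendsto_zero_iff_norm_tendsto_zero]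
        refine squeeze_zero (fun n => norm_nonneg _) (fun n => ?_)
          tendsto_one_div_add_atTop_nhds_zero_nat
        calc ‖v n - G n‖ = dist (G n) (v n) := by rw [dist_comm, dist_eq_norm]
          _ ≤ 1 / ((n : ℝ) + 1) := (hvd n).le
      have hd' : TendstoInMeasure μ (fun n => ⇑(v n) - ⇑(G n)) Filter.atTop (0 : Ω → E) :=
        TendstoInMeasure.congr (fun n => Lp.coeFn_sub (v n) (G n)) (Lp.coeFn_zero E p μ)
          (tendstoInMeasure_of_tendsto_Lp hd)
      exact tendstoInMeasure_triangle' hd' hGtend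
  refine ⟨part1, Set.Subset.antisymm ?_ ?_⟩
  · rintro _ ⟨x, hxmem, rfl⟩
    refine ⟨?_, Lp.memLp x⟩
    obtain ⟨y, hy, hyt⟩ := mem_closure_iff_seq_limit.1 hxmem
    exact ⟨y, hy, tendstoInMeasure_of_tendsto_Lp hyt⟩
  · rintro g ⟨hg0, hgp⟩
    have hgp' : MemLp (⇑g) p μ := hgp
    have hgX : g ∈ Sel0 μ X := part1 ▸ hg0
    refine ⟨hgp'.toLp ⇑g, ?_, AEEqFun.ext hgp'.coeFn_toLp⟩
    rw [hX]
    show ∀ᵐ ω ∂μ, (hgp'.toLp ⇑g) ω ∈ X ω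
    filter_upwards [hgp'.coeFn_toLp, hgX] with ω heq hgω
    rw [heq]; exact hgω
end

section
/- Let 1 ≤ s ≤ p and A a nonempty subset of L^0(Ω;E). With the extended definitions chd_q(A) := chd_0(A) ∩ L^q(Ω;E), the hull operators compose as: chd_p(chd_0 A) = chd_p A, chd_p(chd_s A) = chd_p A, and if chd_p A ≠ ∅ then chd_0(chd_p A) = chd_0 A and chd_s(chd_p A) = chd_s A. -/
open MeasureTheory
open scoped ENNReal

/-- Decomposability for subsets of `L^0(Ω;E)` (a.e.-equivalence classes). -/
def IsDecomposable0 {Ω : Type*} {mΩ : MeasurableSpace Ω} {μ : Measure Ω} {E : Type*}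
    [NormedAddCommGroup E] (A : Set (Ω →ₘ[μ] E)) : Prop :=
  ∀ f ∈ A, ∀ g ∈ A, ∀ B : Set Ω, MeasurableSet B →
    ∀ h : Ω →ₘ[μ] E, (h : Ω → E) =ᵐ[μ] (B.indicator f + Bᶜ.indicator g) → h ∈ A

/-- The decomposable hull in `L^0(Ω;E)`. -/
def decHull0 {Ω : Type*} {mΩ : MeasurableSpace Ω} {μ : Measure Ω} {E : Type*}
    [NormedAddCommGroup E] (A : Set (Ω →ₘ[μ] E)) : Set (Ω →ₘ[μ] E) :=
  ⋂₀ {C : Set (Ω →ₘ[μ] E) | A ⊆ C ∧ IsDecomposable0 C}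

/-- Closure with respect to convergence in probability (in measure) in `L^0(Ω;E)`. -/
def closure0 {Ω : Type*} {mΩ : MeasurableSpace Ω} {μ : Measure Ω} {E : Type*}
    [NormedAddCommGroup E] (S : Set (Ω →ₘ[μ] E)) : Set (Ω →ₘ[μ] E) :=
  {g : Ω →ₘ[μ] E | ∃ f : ℕ → Ω →ₘ[μ] E, (∀ n, f n ∈ S) ∧
    TendstoInMeasure μ (fun n => ⇑(f n)) Filter.atTop ⇑g}

/-- `chd_0 A`: the closure in probability of the decomposable hull of `A`. -/
def chd0 {Ω : Type*} {mΩ : MeasurableSpace Ω} {μ : Measure Ω} {E : Type*}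
    [NormedAddCommGroup E] (A : Set (Ω →ₘ[μ] E)) : Set (Ω →ₘ[μ] E) :=
  closure0 (decHull0 A)

/-- `chd_q A := chd_0 A ∩ L^q(Ω;E)` (the extended definition). -/
def chdq {Ω : Type*} {mΩ : MeasurableSpace Ω} {μ : Measure Ω} {E : Type*}
    [NormedAddCommGroup E] (q : ℝ≥0∞) (A : Set (Ω →ₘ[μ] E)) : Set (Ω →ₘ[μ] E) :=
  chd0 A ∩ {g : Ω →ₘ[μ] E | MemLp (⇑g) q μ}

section Aux

variable {Ω : Type*} {mΩ : MeasurableSpace Ω} {μ : Measure Ω} {E : Type*}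
  [NormedAddCommGroup E]

lemma subset_decHull0 (A : Set (Ω →ₘ[μ] E)) : A ⊆ decHull0 A :=
  fun a ha => Set.mem_sInter.2 fun _C hC => hC.1 ha

lemma decHull0_subset {A C : Set (Ω →ₘ[μ] E)} (h1 : A ⊆ C) (h2 : IsDecomposable0 C) :
    decHull0 A ⊆ C :=
  Set.sInter_subset_of_mem ⟨h1, h2⟩

lemma isDecomposable0_decHull0 (A : Set (Ω →ₘ[μ] E)) : IsDecomposable0 (decHull0 A) :=
  fun f hf g hg B hB h hh => Set.mem_sInter.2 fun C hC =>
    hC.2 f (Set.mem_sInter.1 hf C hC) g (Set.mem_sInter.1 hg C hC) B hB h hh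

lemma subset_closure0 (S : Set (Ω →ₘ[μ] E)) : S ⊆ closure0 S := by
  intro f hf
  refine ⟨fun _ => f, fun _ => hf, tendstoInMeasure_iff_dist.2 fun ε hε => ?_⟩
  have h0 : {x | ε ≤ dist ((f : Ω → E) x) ((f : Ω → E) x)} = ∅ := by
    ext x
    simp only [Set.mem_setOf_eq, dist_self, Set.mem_empty_iff_false, iff_false, not_le]
    exact hε
  simp only [h0, measure_empty]
  exact tendsto_const_nhds

lemma closure0_mono {S T : Set (Ω →ₘ[μ] E)} (h : S ⊆ T) : closure0 S ⊆ closure0 T :=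
  fun _g ⟨f, hf, hc⟩ => ⟨f, fun n => h (hf n), hc⟩

/-- Triangle-inequality bound on measures of deviation sets. -/
lemma meas_dist_le (f g h : Ω → E) {ε : ℝ} :
    μ {x | ε ≤ dist (f x) (h x)} ≤
      μ {x | ε / 2 ≤ dist (f x) (g x)} + μ {x | ε / 2 ≤ dist (g x) (h x)} := by
  refine le_trans (measure_mono ?_) (measure_union_le _ _)
  intro x hx
  simp only [Set.mem_setOf_eq] at hx
  by_contra hcon
  simp only [Set.mem_union, Set.mem_setOf_eq, not_or, not_le] at hcon
  have := dist_triangle (f x) (g x) (h x)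
  linarith

lemma closure0_closure0 (S : Set (Ω →ₘ[μ] E)) : closure0 (closure0 S) ⊆ closure0 S := by
  rintro g ⟨f, hf, hfg⟩
  choose fk hfkS hfkc using hf
  -- pick a diagonal subsequence
  have hsel : ∀ n : ℕ, ∃ k : ℕ,
      μ {x | ((n : ℝ) + 1)⁻¹ ≤ dist (fk n k x) ((f n : Ω → E) x)} ≤ ((n : ℝ≥0∞) + 1)⁻¹ := by
    intro n
    have hpos : (0 : ℝ) < ((n : ℝ) + 1)⁻¹ := by positivity
    have hpos' : (0 : ℝ≥0∞) < ((n : ℝ≥0∞) + 1)⁻¹ :=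
      ENNReal.inv_pos.2 (ENNReal.add_ne_top.2 ⟨ENNReal.natCast_ne_top n, ENNReal.one_ne_top⟩)
    have := (tendstoInMeasure_iff_dist.1 (hfkc n) (((n : ℝ) + 1)⁻¹) hpos).eventually (gt_mem_nhds hpos')
    rcases (Filter.eventually_atTop.1 this) with ⟨N, hN⟩
    exact ⟨N, (hN N le_rfl).le⟩
  choose k hk using hsel
  refine ⟨fun n => fk n (k n), fun n => hfkS n (k n), tendstoInMeasure_iff_dist.2 fun ε hε => ?_⟩
  have hbound : ∀ n, μ {x | ε ≤ dist (fk n (k n) x) ((g : Ω → E) x)} ≤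
      μ {x | ε / 2 ≤ dist (fk n (k n) x) ((f n : Ω → E) x)} +
      μ {x | ε / 2 ≤ dist ((f n : Ω → E) x) ((g : Ω → E) x)} :=
    fun n => meas_dist_le _ _ _
  have h1 : Filter.Tendsto
      (fun n => μ {x | ε / 2 ≤ dist (fk n (k n) x) ((f n : Ω → E) x)})
      Filter.atTop (nhds 0) := by
    have hb : Filter.Tendsto (fun n : ℕ => ((n : ℝ≥0∞) + 1)⁻¹) Filter.atTop (nhds 0) := by
      have h1 := ENNReal.tendsto_inv_nat_nhds_zero.comp (Filter.tendsto_add_atTop_nat 1)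
      refine h1.congr fun n => ?_
      simp [Function.comp, Nat.cast_add]
    refine tendsto_of_tendsto_of_tendsto_of_le_of_le' tendsto_const_nhds hb
      (Filter.Eventually.of_forall fun n => zero_le) ?_
    obtain ⟨N, hN⟩ := exists_nat_one_div_lt (half_pos hε)
    refine Filter.eventually_atTop.2 ⟨N, fun n hn => ?_⟩
    refine le_trans (measure_mono ?_) (hk n)
    intro x hx
    simp only [Set.mem_setOf_eq] at hx ⊢
    refine le_trans ?_ hx
    have h2 : ((n : ℝ) + 1)⁻¹ ≤ ((N : ℝ) + 1)⁻¹ := by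
      apply inv_anti₀ (by positivity)
      have : (N : ℝ) ≤ n := Nat.cast_le.2 hn
      linarith
    have h3 : 1 / ((N : ℝ) + 1) < ε / 2 := hN
    rw [one_div] at h3
    linarith
  have h2 : Filter.Tendsto
      (fun n => μ {x | ε / 2 ≤ dist ((f n : Ω → E) x) ((g : Ω → E) x)})
      Filter.atTop (nhds 0) := tendstoInMeasure_iff_dist.1 hfg (ε / 2) (half_pos hε)
  have hsum := h1.add h2
  rw [add_zero] at hsum
  exact tendsto_of_tendsto_of_tendsto_of_le_of_le tendsto_const_nhds hsum
    (fun n => zero_le) hbound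

/-- Convergence in measure of indicator combinations. -/
lemma tendstoInMeasure_indicator {fn gn : ℕ → Ω → E} {f g : Ω → E} (B : Set Ω)
    (hf : TendstoInMeasure μ fn Filter.atTop f) (hg : TendstoInMeasure μ gn Filter.atTop g) :
    TendstoInMeasure μ (fun n => B.indicator (fn n) + Bᶜ.indicator (gn n)) Filter.atTop
      (B.indicator f + Bᶜ.indicator g) := by
  rw [tendstoInMeasure_iff_dist]; intro ε hε
  have hbound : ∀ n, μ {x | ε ≤ dist ((B.indicator (fn n) + Bᶜ.indicator (gn n)) x)
      ((B.indicator f + Bᶜ.indicator g) x)} ≤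
      μ {x | ε ≤ dist (fn n x) (f x)} + μ {x | ε ≤ dist (gn n x) (g x)} := by
    intro n
    refine le_trans (measure_mono ?_) (measure_union_le _ _)
    intro x hx
    simp only [Set.mem_setOf_eq, Pi.add_apply] at hx
    by_cases hxB : x ∈ B
    · left
      simp only [Set.mem_setOf_eq]
      rwa [Set.indicator_of_mem hxB, Set.indicator_of_mem hxB,
        Set.indicator_of_notMem (by simpa using hxB),
        Set.indicator_of_notMem (by simpa using hxB), add_zero, add_zero] at hx
    · right
      simp only [Set.mem_setOf_eq]
      rwa [Set.indicator_of_notMem hxB, Set.indicator_of_notMem hxB,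
        Set.indicator_of_mem (by simpa using hxB),
        Set.indicator_of_mem (by simpa using hxB), zero_add, zero_add] at hx
  have hsum := (tendstoInMeasure_iff_dist.1 hf ε hε).add (tendstoInMeasure_iff_dist.1 hg ε hε)
  rw [add_zero] at hsum
  exact tendsto_of_tendsto_of_tendsto_of_le_of_le tendsto_const_nhds hsum
    (fun n => zero_le) hbound

lemma IsDecomposable0.closure0' {S : Set (Ω →ₘ[μ] E)} (hS : IsDecomposable0 S) :
    IsDecomposable0 (closure0 S) := by
  rintro f ⟨fn, hfn, hfc⟩ g ⟨gn, hgn, hgc⟩ B hB h hh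
  have hmeas : ∀ n, AEStronglyMeasurable
      (B.indicator ⇑(fn n) + Bᶜ.indicator ⇑(gn n)) μ := fun n =>
    ((fn n).aestronglyMeasurable.indicator hB).add
      ((gn n).aestronglyMeasurable.indicator hB.compl)
  set hn : ℕ → Ω →ₘ[μ] E := fun n => AEEqFun.mk _ (hmeas n) with hhn
  have hmem : ∀ n, hn n ∈ S := fun n =>
    hS (fn n) (hfn n) (gn n) (hgn n) B hB (hn n) (AEEqFun.coeFn_mk _ _)
  refine ⟨hn, hmem, ?_⟩
  have hT := tendstoInMeasure_indicator B hfc hgc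
  exact hT.congr (fun n => (AEEqFun.coeFn_mk _ (hmeas n)).symm) hh.symm

lemma subset_chd0 (A : Set (Ω →ₘ[μ] E)) : A ⊆ chd0 A :=
  (subset_decHull0 A).trans (subset_closure0 _)

lemma isDecomposable0_chd0 (A : Set (Ω →ₘ[μ] E)) : IsDecomposable0 (chd0 A) :=
  (isDecomposable0_decHull0 A).closure0'

lemma chd0_min {A B : Set (Ω →ₘ[μ] E)} (h : A ⊆ chd0 B) : chd0 A ⊆ chd0 B := by
  have h1 : decHull0 A ⊆ chd0 B := decHull0_subset h (isDecomposable0_chd0 B)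
  exact (closure0_mono h1).trans (closure0_closure0 _)

end Aux

/-- For `1 ≤ s ≤ p < ∞` and nonempty `A ⊆ L^0(Ω;E)`:
`chd_p (chd_0 A) = chd_p A`, `chd_p (chd_s A) = chd_p A`, and if `chd_p A ≠ ∅` then
`chd_0 (chd_p A) = chd_0 A` and `chd_s (chd_p A) = chd_s A`. -/
theorem chd_hull_composition
    {Ω : Type*} {mΩ : MeasurableSpace Ω} {μ : Measure Ω} [IsProbabilityMeasure μ]
    (hμ : μ.IsComplete) {E : Type*} [NormedAddCommGroup E] [NormedSpace ℝ E]
    [CompleteSpace E] [SecondCountableTopology E]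
    (s p : ℝ≥0∞) (hs : 1 ≤ s) (hsp : s ≤ p) (hp' : p ≠ ⊤)
    (A : Set (Ω →ₘ[μ] E)) (hA : A.Nonempty) :
    chdq p (chd0 A) = chdq p A ∧
    chdq p (chdq s A) = chdq p A ∧
    ((chdq p A).Nonempty →
      chd0 (chdq p A) = chd0 A ∧ chdq s (chdq p A) = chdq s A) := by
  have hidem : chd0 (chd0 A) = chd0 A :=
    Set.Subset.antisymm (chd0_min Set.Subset.rfl) (subset_chd0 _)
  refine ⟨?_, ?_, ?_⟩
  · show chd0 (chd0 A) ∩ _ = chd0 A ∩ _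
    rw [hidem]
  · -- chdq p (chdq s A) = chdq p A
    ext g
    constructor
    · rintro ⟨hg, hgp⟩
      exact ⟨chd0_min (Set.inter_subset_left) hg, hgp⟩
    · rintro ⟨hg, hgp⟩
      have hgs : g ∈ chdq s A := ⟨hg, hgp.mono_exponent hsp⟩
      exact ⟨subset_chd0 _ hgs, hgp⟩
  · rintro ⟨f₀, hf₀⟩
    have key : chd0 (chdq p A) = chd0 A := by
      refine Set.Subset.antisymm (chd0_min Set.inter_subset_left) (chd0_min ?_)
      -- A ⊆ chd0 (chdq p A) via truncation
      intro a haA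
      have ha : AEStronglyMeasurable (⇑a) μ := a.aestronglyMeasurable
      set a' : Ω → E := ha.mk ⇑a with ha'
      have ha'sm : StronglyMeasurable a' := ha.stronglyMeasurable_mk
      set B : ℕ → Set Ω := fun n => {ω | ‖a' ω‖ ≤ (n : ℝ)} with hB
      have hBmeas : ∀ n, MeasurableSet (B n) := by
        intro n
        exact (ha'sm.norm.measurable) measurableSet_Iic
      set hfun : ℕ → Ω → E := fun n => (B n).indicator a' + (B n)ᶜ.indicator ⇑f₀ with hhfun
      have hmeas : ∀ n, AEStronglyMeasurable (hfun n) μ := fun n =>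
        (ha'sm.aestronglyMeasurable.indicator (hBmeas n)).add
          (f₀.aestronglyMeasurable.indicator (hBmeas n).compl)
      set hn : ℕ → Ω →ₘ[μ] E := fun n => AEEqFun.mk (hfun n) (hmeas n) with hhn
      -- each hn n lies in chd0 A
      have hcoe : ∀ n, ⇑(hn n) =ᵐ[μ] hfun n := fun n => AEEqFun.coeFn_mk _ _
      have heq : ∀ n, (hfun n : Ω → E) =ᵐ[μ] ((B n).indicator ⇑a + (B n)ᶜ.indicator ⇑f₀) := by
        intro n
        filter_upwards [ha.ae_eq_mk] with ω hω
        simp only [hhfun, Pi.add_apply, Set.indicator_apply]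
        rw [hω]
      have hmemchd0 : ∀ n, hn n ∈ chd0 A := by
        intro n
        exact isDecomposable0_chd0 A a (subset_chd0 A haA) f₀ hf₀.1 (B n) (hBmeas n)
          (hn n) ((hcoe n).trans (heq n))
      -- each hn n is in L^p
      have hmemLp : ∀ n, MemLp (⇑(hn n)) p μ := by
        intro n
        have h1 : MemLp ((B n).indicator a') p μ := by
          refine MemLp.of_bound (ha'sm.aestronglyMeasurable.indicator (hBmeas n)) (n : ℝ) ?_
          refine Filter.Eventually.of_forall fun ω => ?_
          by_cases hω : ω ∈ B n
          · rw [Set.indicator_of_mem hω]; exact hω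
          · rw [Set.indicator_of_notMem hω]; simp
        have h2 : MemLp ((B n)ᶜ.indicator ⇑f₀) p μ := hf₀.2.indicator (hBmeas n).compl
        exact ((h1.add h2).ae_eq (hcoe n).symm)
      -- convergence to a
      have htend : TendstoInMeasure μ (fun n => ⇑(hn n)) Filter.atTop ⇑a := by
        have hae : ∀ᵐ ω ∂μ, Filter.Tendsto (fun n => hfun n ω) Filter.atTop (nhds (a' ω)) := by
          refine Filter.Eventually.of_forall fun ω => ?_
          obtain ⟨N, hN⟩ := exists_nat_ge ‖a' ω‖
          refine Filter.Tendsto.congr' ?_ tendsto_const_nhds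
          refine Filter.eventually_atTop.2 ⟨N, fun n hn' => ?_⟩
          have hωB : ω ∈ B n := by
            simp only [hB, Set.mem_setOf_eq]
            exact hN.trans (Nat.cast_le.2 hn')
          simp only [hhfun, Pi.add_apply, Set.indicator_of_mem hωB,
            Set.indicator_of_notMem (by simpa using hωB : ω ∉ (B n)ᶜ), add_zero]
        have := tendstoInMeasure_of_tendsto_ae hmeas hae
        exact this.congr (fun n => (hcoe n).symm) ha.ae_eq_mk.symm
      exact ⟨fun n => hn n, fun n => subset_decHull0 _ ⟨hmemchd0 n, hmemLp n⟩, htend⟩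
    refine ⟨key, ?_⟩
    show chd0 (chdq p A) ∩ _ = chd0 A ∩ _
    rw [key]
end

section
/- Let A be a decomposable convex subset of L^p(Ω;E). Then the set of extreme points of A is decomposable: if ξ and ζ are extreme points of A and B is an event, then 1_B ξ + 1_{B^c} ζ is an extreme point of A. If moreover A is compact convex, then A is decomposable if and only if its set of extreme points is decomposable. -/
open MeasureTheory
open scoped ENNReal

section Aux

variable {Ω : Type*} {mΩ : MeasurableSpace Ω} {μ : Measure Ω} {E : Type*}
  [NormedAddCommGroup E] [NormedSpace ℝ E] {p : ℝ≥0∞} [Fact (1 ≤ p)] {B : Set Ω}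

/-- Multiplication by the indicator of `B` as a linear map on `Lp`. -/
noncomputable def indLM (hB : MeasurableSet B) : Lp E p μ →ₗ[ℝ] Lp E p μ where
  toFun f := ((Lp.memLp f).indicator hB).toLp (B.indicator f)
  map_add' f g := by
    refine Lp.ext (((Lp.memLp (f + g)).indicator hB).coeFn_toLp.trans ?_)
    have h1 := ((Lp.memLp f).indicator hB).coeFn_toLp (μ := μ)
    have h2 := ((Lp.memLp g).indicator hB).coeFn_toLp (μ := μ)
    filter_upwards [Lp.coeFn_add f g,
      Lp.coeFn_add (((Lp.memLp f).indicator hB).toLp (B.indicator f))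
        (((Lp.memLp g).indicator hB).toLp (B.indicator g)), h1, h2] with ω hfg hadd hf hg
    rw [hadd]
    simp only [Pi.add_apply, hf, hg]
    by_cases hω : ω ∈ B
    · rw [Set.indicator_of_mem hω, Set.indicator_of_mem hω, Set.indicator_of_mem hω, hfg]; rfl
    · simp [Set.indicator_of_notMem hω]
  map_smul' c f := by
    refine Lp.ext (((Lp.memLp (c • f)).indicator hB).coeFn_toLp.trans ?_)
    have h1 := ((Lp.memLp f).indicator hB).coeFn_toLp (μ := μ)
    filter_upwards [Lp.coeFn_smul c f,
      Lp.coeFn_smul c (((Lp.memLp f).indicator hB).toLp (B.indicator f)), h1]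
      with ω hcf hsm hf
    rw [RingHom.id_apply, hsm]
    simp only [Pi.smul_apply, hf]
    by_cases hω : ω ∈ B
    · rw [Set.indicator_of_mem hω, Set.indicator_of_mem hω, hcf]; rfl
    · simp [Set.indicator_of_notMem hω]

lemma indLM_coeFn (hB : MeasurableSet B) (f : Lp E p μ) :
    ⇑(indLM hB f) =ᵐ[μ] B.indicator f :=
  ((Lp.memLp f).indicator hB).coeFn_toLp

lemma indLM_norm_le (hB : MeasurableSet B) (f : Lp E p μ) : ‖indLM hB f‖ ≤ ‖f‖ := by
  rw [show ‖indLM hB f‖ = (eLpNorm (B.indicator ⇑f) p μ).toReal from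
    Lp.norm_toLp (B.indicator ⇑f) ((Lp.memLp f).indicator hB), Lp.norm_def]
  exact ENNReal.toReal_mono (Lp.eLpNorm_ne_top f) (eLpNorm_indicator_le _)

/-- Multiplication by the indicator of `B` as a continuous linear map on `Lp`. -/
noncomputable def indCLM (hB : MeasurableSet B) : Lp E p μ →L[ℝ] Lp E p μ :=
  LinearMap.mkContinuous (indLM hB) 1 fun f => by
    simpa using indLM_norm_le hB f

lemma indCLM_coeFn (hB : MeasurableSet B) (f : Lp E p μ) :
    ⇑(indCLM hB f) =ᵐ[μ] B.indicator f :=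
  indLM_coeFn hB f

/-- The "decomposition" continuous linear map `(f, g) ↦ 1_B f + 1_{Bᶜ} g`. -/
noncomputable def decCLM (hB : MeasurableSet B) : (Lp E p μ × Lp E p μ) →L[ℝ] Lp E p μ :=
  (indCLM hB).comp (ContinuousLinearMap.fst ℝ _ _) +
    (indCLM hB.compl).comp (ContinuousLinearMap.snd ℝ _ _)

lemma decCLM_coeFn (hB : MeasurableSet B) (f g : Lp E p μ) :
    ⇑(decCLM hB (f, g)) =ᵐ[μ] B.indicator f + Bᶜ.indicator g := by
  have : decCLM hB (f, g) = indCLM hB f + indCLM hB.compl g := rfl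
  rw [this]
  filter_upwards [Lp.coeFn_add (indCLM hB f) (indCLM hB.compl g),
    indCLM_coeFn hB f, indCLM_coeFn hB.compl g] with ω h1 h2 h3
  rw [h1]
  simp [h2, h3]

end Aux

/-- For a convex subset `A` of `L^p(Ω;E)`: if `A` is decomposable then its set of extreme
points is decomposable; if moreover `A` is compact, then `A` is decomposable if and only
if its set of extreme points is decomposable. -/
theorem extremePoints_decomposable
    {Ω : Type*} {mΩ : MeasurableSpace Ω} {μ : Measure Ω} [IsProbabilityMeasure μ]
    {E : Type*} [NormedAddCommGroup E] [NormedSpace ℝ E] [CompleteSpace E]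
    [SecondCountableTopology E] {p : ℝ≥0∞} [Fact (1 ≤ p)] (hp' : p ≠ ⊤)
    (A : Set (Lp E p μ)) (hconv : Convex ℝ A) :
    (IsDecomposable A → IsDecomposable (A.extremePoints ℝ)) ∧
    (IsCompact A → (IsDecomposable A ↔ IsDecomposable (A.extremePoints ℝ))) := by
  have main : IsDecomposable A → IsDecomposable (A.extremePoints ℝ) := by
    intro hdec ξ hξ ζ hζ B hB h hh
    refine ⟨hdec ξ hξ.1 ζ hζ.1 B hB h hh, ?_⟩
    intro y hy z hz hseg
    obtain ⟨a, b, ha, hb, hab, hsum⟩ := hseg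
    -- pointwise a.e. identity for `h`
    have hsum' : (fun ω => a • y ω + b • z ω) =ᵐ[μ] ⇑h := by
      rw [← hsum]
      filter_upwards [Lp.coeFn_add (a • y) (b • z), Lp.coeFn_smul a y, Lp.coeFn_smul b z]
        with ω h1 h2 h3
      rw [h1]; simp [h2, h3]
    -- the two "localized" open segments
    have key : ∀ w : Lp E p μ, w ∈ A.extremePoints ℝ →
        (∀ ω, ω ∈ B → w ω = (B.indicator ξ + Bᶜ.indicator ζ) ω) →
        (∀ ω, ω ∉ B → w ω = (B.indicator ξ + Bᶜ.indicator ζ) ω) → True := fun _ _ _ _ => trivial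
    clear key
    -- `1_B y + 1_{Bᶜ} ξ` and `1_B z + 1_{Bᶜ} ξ` are in `A`
    have memP : ∀ u : Lp E p μ, u ∈ A → decCLM hB (u, ξ) ∈ A := fun u hu =>
      hdec u hu ξ hξ.1 B hB _ (decCLM_coeFn hB u ξ)
    have memQ : ∀ u : Lp E p μ, u ∈ A → decCLM hB (ζ, u) ∈ A := fun u hu =>
      hdec ζ hζ.1 u hu B hB _ (decCLM_coeFn hB ζ u)
    -- ξ is a convex combination of the localized elements
    have combP : a • decCLM hB (y, ξ) + b • decCLM hB (z, ξ) = ξ := by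
      refine Lp.ext ?_
      filter_upwards [Lp.coeFn_add (a • decCLM hB (y, ξ)) (b • decCLM hB (z, ξ)),
        Lp.coeFn_smul a (decCLM hB (y, ξ)), Lp.coeFn_smul b (decCLM hB (z, ξ)),
        decCLM_coeFn hB y ξ, decCLM_coeFn hB z ξ, hsum', hh] with ω h1 h2 h3 h4 h5 h6 h7
      rw [h1]
      simp only [Pi.add_apply, Pi.smul_apply, h2, h3, h4, h5]
      by_cases hω : ω ∈ B
      · have : h ω = ξ ω := by
          rw [h7]; simp [Set.indicator_of_mem hω, Set.indicator_of_notMem (by simpa using hω :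
            ω ∉ Bᶜ)]
        simp only [Set.indicator_of_mem hω, Set.indicator_of_notMem (by simpa using hω :
          ω ∉ Bᶜ), add_zero]
        rw [h6, this]
      · simp only [Set.indicator_of_notMem hω, Set.indicator_of_mem
          (by simpa using hω : ω ∈ Bᶜ), zero_add]
        rw [← add_smul, hab, one_smul]
    have combQ : a • decCLM hB (ζ, y) + b • decCLM hB (ζ, z) = ζ := by
      refine Lp.ext ?_
      filter_upwards [Lp.coeFn_add (a • decCLM hB (ζ, y)) (b • decCLM hB (ζ, z)),
        Lp.coeFn_smul a (decCLM hB (ζ, y)), Lp.coeFn_smul b (decCLM hB (ζ, z)),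
        decCLM_coeFn hB ζ y, decCLM_coeFn hB ζ z, hsum', hh] with ω h1 h2 h3 h4 h5 h6 h7
      rw [h1]
      simp only [Pi.add_apply, Pi.smul_apply, h2, h3, h4, h5]
      by_cases hω : ω ∈ B
      · simp only [Set.indicator_of_mem hω, Set.indicator_of_notMem (by simpa using hω :
          ω ∉ Bᶜ), add_zero]
        rw [← add_smul, hab, one_smul]
      · have : h ω = ζ ω := by
          rw [h7]; simp [Set.indicator_of_notMem hω, Set.indicator_of_mem
            (by simpa using hω : ω ∈ Bᶜ)]
        simp only [Set.indicator_of_notMem hω, Set.indicator_of_mem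
          (by simpa using hω : ω ∈ Bᶜ), zero_add]
        rw [h6, this]
    have hPseg : ξ ∈ openSegment ℝ (decCLM hB (y, ξ)) (decCLM hB (z, ξ)) :=
      ⟨a, b, ha, hb, hab, combP⟩
    have hQseg : ζ ∈ openSegment ℝ (decCLM hB (ζ, y)) (decCLM hB (ζ, z)) :=
      ⟨a, b, ha, hb, hab, combQ⟩
    obtain ⟨hPy, hPz⟩ := (mem_extremePoints.1 hξ).2 _ (memP y hy) _ (memP z hz) hPseg
    obtain ⟨hQy, hQz⟩ := (mem_extremePoints.1 hζ).2 _ (memQ y hy) _ (memQ z hz) hQseg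
    -- conclude y = h and z = h
    have conc : ∀ u : Lp E p μ, decCLM hB (u, ξ) = ξ → decCLM hB (ζ, u) = ζ → u = h := by
      intro u h1 h2
      have e1 : ⇑(decCLM hB (u, ξ)) =ᵐ[μ] ⇑ξ := by rw [h1]
      have e2 : ⇑(decCLM hB (ζ, u)) =ᵐ[μ] ⇑ζ := by rw [h2]
      refine Lp.ext ?_
      filter_upwards [e1, e2, decCLM_coeFn hB u ξ, decCLM_coeFn hB ζ u, hh]
        with ω f1 f2 f3 f4 f5
      rw [f5]
      by_cases hω : ω ∈ B
      · have := f1.symm.trans f3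
        simp only [Pi.add_apply, Set.indicator_of_mem hω,
          Set.indicator_of_notMem (by simpa using hω : ω ∉ Bᶜ), add_zero] at this ⊢
        exact this.symm
      · have := f2.symm.trans f4
        simp only [Pi.add_apply, Set.indicator_of_notMem hω,
          Set.indicator_of_mem (by simpa using hω : ω ∈ Bᶜ), zero_add] at this ⊢
        exact this.symm
    exact conc y hPy hQy
  refine ⟨main, fun hcomp => ⟨main, fun hdecExt => ?_⟩⟩
  -- converse direction under compactness, via Krein–Milman
  set X := A.extremePoints ℝ with hX
  have hKM : closure (convexHull ℝ X) = A :=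
    closure_convexHull_extremePoints hcomp hconv
  intro f hf g hg B hB h hh
  have hdet : h = decCLM hB (f, g) :=
    Lp.ext (hh.trans (decCLM_coeFn hB f g).symm)
  rw [hdet]
  -- the decomposition map sends extreme points to extreme points
  have hTX : decCLM (μ := μ) (E := E) (p := p) hB '' (X ×ˢ X) ⊆ X := by
    rintro - ⟨⟨u, v⟩, ⟨hu, hv⟩, rfl⟩
    exact hdecExt u hu v hv B hB _ (decCLM_coeFn hB u v)
  have hprod : A ×ˢ A = closure (convexHull ℝ (X ×ˢ X)) := by
    rw [convexHull_prod, closure_prod_eq, hKM]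
  have step1 : decCLM (μ := μ) (E := E) (p := p) hB '' (A ×ˢ A) ⊆
      closure (decCLM (μ := μ) (E := E) (p := p) hB '' convexHull ℝ (X ×ˢ X)) := by
    rw [hprod]
    exact image_closure_subset_closure_image (decCLM hB).continuous
  have step2 : decCLM (μ := μ) (E := E) (p := p) hB '' convexHull ℝ (X ×ˢ X) =
      convexHull ℝ (decCLM (μ := μ) (E := E) (p := p) hB '' (X ×ˢ X)) :=
    (decCLM (μ := μ) (E := E) (p := p) hB).toLinearMap.image_convexHull _
  have : decCLM hB (f, g) ∈ closure (convexHull ℝ X) := by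
    have hmem : decCLM hB (f, g) ∈ decCLM (μ := μ) (E := E) (p := p) hB '' (A ×ˢ A) :=
      ⟨(f, g), ⟨hf, hg⟩, rfl⟩
    refine closure_mono ?_ (step2 ▸ step1 hmem)
    exact convexHull_mono hTX
  rwa [hKM] at this
end
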